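/- arXiv:0910.2187 — 10 statements merged into one kernel-verified Lean document; each statement's English description precedes it below -/
import Mathlib

section
/- Let P₁, …, P_k ⊆ ℝⁿ be convex polyhedra (each the intersection of finitely many closed half-spaces, with at least one defining inequality). Then the closure of ℝⁿ \ (P₁ ∪ ⋯ ∪ P_k) is a finite union of convex polyhedra. -/
/-- A convex polyhedron: the solution set of `A x ≤ b` for an `m × n` matrix
`A` and `b ∈ ℝᵐ`, with `m ≥ 1`. -/
def IsConvexPolyhedron (n : ℕ) (P : Set (Fin n → ℝ)) : Prop :=
  ∃ (m : ℕ), 1 ≤ m ∧ ∃ (A : Matrix (Fin m) (Fin n) ℝ) (b : Fin m → ℝ),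
    P = {x | A.mulVec x ≤ b}

open Set

lemma poly_empty (n : ℕ) : IsConvexPolyhedron n (∅ : Set (Fin n → ℝ)) := by
  refine ⟨1, le_refl 1, 0, fun _ => -1, ?_⟩
  ext x
  simp only [Matrix.zero_mulVec, mem_empty_iff_false, mem_setOf_eq, Pi.le_def, false_iff]
  intro h
  have := h 0
  norm_num at this

lemma poly_univ (n : ℕ) : IsConvexPolyhedron n (univ : Set (Fin n → ℝ)) := by
  refine ⟨1, le_refl 1, 0, fun _ => 0, ?_⟩
  ext x
  simp [Matrix.zero_mulVec, Pi.le_def]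

lemma cont_lin {n k : ℕ} (a : Fin k → Fin n → ℝ) (i : Fin k) :
    Continuous (fun x : Fin n → ℝ => ∑ j, a i j * x j) :=
  continuous_finset_sum _ fun j _ => continuous_const.mul (continuous_apply j)

lemma closure_strict {n k : ℕ} (a : Fin k → Fin n → ℝ) (c : Fin k → ℝ)
    (hne : {x : Fin n → ℝ | ∀ i, c i < ∑ j, a i j * x j}.Nonempty) :
    closure {x : Fin n → ℝ | ∀ i, c i < ∑ j, a i j * x j}
      = {x : Fin n → ℝ | ∀ i, c i ≤ ∑ j, a i j * x j} := by
  obtain ⟨z, hz⟩ := hne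
  apply Subset.antisymm
  · have hclosed : IsClosed {x : Fin n → ℝ | ∀ i, c i ≤ ∑ j, a i j * x j} := by
      have : {x : Fin n → ℝ | ∀ i, c i ≤ ∑ j, a i j * x j}
          = ⋂ i, (fun x : Fin n → ℝ => ∑ j, a i j * x j) ⁻¹' Ici (c i) := by
        ext x; simp [mem_iInter]
      rw [this]
      exact isClosed_iInter fun i => (isClosed_Ici).preimage (cont_lin a i)
    exact closure_minimal (fun x hx i => (hx i).le) hclosed
  · intro y hy
    have hlin : ∀ (i : Fin k) (t : ℝ),
        (∑ j, a i j * (y j + t * (z j - y j)))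
          = (∑ j, a i j * y j) + t * ((∑ j, a i j * z j) - (∑ j, a i j * y j)) := by
      intro i t
      have e : ∀ j, a i j * (y j + t * (z j - y j))
          = a i j * y j + t * (a i j * z j - a i j * y j) := fun j => by ring
      rw [Finset.sum_congr rfl (fun j _ => e j), Finset.sum_add_distrib, ← Finset.mul_sum,
        Finset.sum_sub_distrib]
    have htend : Filter.Tendsto
        (fun N : ℕ => (fun j => y j + (1 / (N + 1) : ℝ) * (z j - y j)))
        Filter.atTop (nhds y) := by
      have h0 : Filter.Tendsto (fun N : ℕ => (1 / (N + 1) : ℝ)) Filter.atTop (nhds 0) :=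
        tendsto_one_div_add_atTop_nhds_zero_nat
      have := Filter.Tendsto.smul h0
        (tendsto_const_nhds (x := fun j => z j - y j) (f := Filter.atTop (α := ℕ)))
      have h2 := (tendsto_const_nhds (x := y) (f := Filter.atTop (α := ℕ))).add this
      convert h2 using 1
      · funext N j
        simp
      · simp
    refine mem_closure_of_tendsto htend (Filter.Eventually.of_forall fun N => ?_)
    intro i
    have ht0 : (0 : ℝ) < 1 / (N + 1) := by positivity
    have ht1 : (1 / (N + 1) : ℝ) ≤ 1 := by
      rw [div_le_one (by positivity)]
      linarith [Nat.cast_nonneg (α := ℝ) N]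
    have h1 := hy i
    have h2 := hz i
    simp only [mem_setOf_eq] at h1 h2 ⊢
    rw [hlin i]
    nlinarith

theorem stmt_1 (n k : ℕ) (P : Fin k → Set (Fin n → ℝ))
    (hP : ∀ i, IsConvexPolyhedron n (P i)) :
    ∃ (K : ℕ) (Q : Fin K → Set (Fin n → ℝ)),
      (∀ j, IsConvexPolyhedron n (Q j)) ∧
      closure (Set.univ \ ⋃ i, P i) = ⋃ j, Q j := by
  choose m hm A b hPeq using hP
  set ι := ∀ i : Fin k, Fin (m i) with hι
  let S : ι → Set (Fin n → ℝ) :=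
    fun f => {x | ∀ i, b i (f i) < ∑ j, A i (f i) j * x j}
  have hSform : ∀ f : ι, S f = {x : Fin n → ℝ | ∀ i, b i (f i) < ∑ j, A i (f i) j * x j} :=
    fun f => rfl
  -- claim 1: complement equals union of S f
  have hcompl : (univ \ ⋃ i, P i) = ⋃ f : ι, S f := by
    ext x
    simp only [mem_diff, mem_univ, true_and, mem_iUnion, mem_setOf_eq, S]
    constructor
    · intro hx
      have h : ∀ i, ∃ r, b i r < ∑ j, A i r j * x j := by
        intro i
        have hxi : x ∉ P i := fun hmem => hx ⟨i, hmem⟩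
        rw [hPeq i] at hxi
        simp only [mem_setOf_eq, Pi.le_def, not_forall, not_le] at hxi
        obtain ⟨r, hr⟩ := hxi
        refine ⟨r, ?_⟩
        simpa [Matrix.mulVec, dotProduct] using hr
      exact Classical.skolem.mp h
    · rintro ⟨f, hf⟩
      rintro ⟨i, hi⟩
      rw [hPeq i] at hi
      have := hi (f i)
      have h2 : (A i).mulVec x (f i) = ∑ j, A i (f i) j * x j := by
        simp [Matrix.mulVec, dotProduct]
      rw [h2] at this
      exact absurd this (not_le.mpr (hf i))
  -- closure distributes over finite union
  have hclos : closure (univ \ ⋃ i, P i) = ⋃ f : ι, closure (S f) := by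
    rw [hcompl]
    exact closure_iUnion_of_finite S
  -- each closure (S f) is a polyhedron
  have hpoly : ∀ f : ι, IsConvexPolyhedron n (closure (S f)) := by
    intro f
    rcases eq_empty_or_nonempty (S f) with h | h
    · rw [h, closure_empty]; exact poly_empty n
    · rw [hSform f, closure_strict _ _ h]
      rcases Nat.eq_zero_or_pos k with hk | hk
      · subst hk
        have : {x : Fin n → ℝ | ∀ i : Fin 0, b i (f i) ≤ ∑ j, A i (f i) j * x j} = univ := by
          ext x; simp [Fin.isEmpty]
        rw [this]; exact poly_univ n
      · refine ⟨k, hk, -Matrix.of (fun i j => A i (f i) j), fun i => -(b i (f i)), ?_⟩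
        ext x
        simp [Pi.le_def, Matrix.neg_mulVec, Matrix.mulVec, dotProduct, neg_le_neg_iff]
  -- reindex by Fin K
  refine ⟨Fintype.card ι, fun j => closure (S ((Fintype.equivFin ι).symm j)), ?_, ?_⟩
  · intro j; exact hpoly _
  · rw [hclos]
    ext x
    simp only [mem_iUnion]
    constructor
    · rintro ⟨f, hf⟩; exact ⟨Fintype.equivFin ι f, by simpa using hf⟩
    · rintro ⟨j, hj⟩; exact ⟨_, hj⟩
end

section
/- Let Φ : V → W be a C¹-diffeomorphism between open sets V, W ⊆ ℝⁿ, let Ω ⊆ V be such that both Ω and Φ(Ω) are convex, and let p ∈ Ω. Then a vector v ∈ ℝⁿ is normal to Ω at p (i.e., ⟨v, x − p⟩ ≤ 0 for all x ∈ Ω) if and only if (Φ'(p)⁻¹)* v is normal to Φ(Ω) at Φ(p). -/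
open scoped RealInnerProductSpace Topology
open Filter

private lemma key_lemma {n : ℕ} (S : Set (EuclideanSpace ℝ (Fin n))) (hS : Convex ℝ S)
    (q : EuclideanSpace ℝ (Fin n)) (hq : q ∈ S)
    (g : EuclideanSpace ℝ (Fin n) → EuclideanSpace ℝ (Fin n))
    (D : EuclideanSpace ℝ (Fin n) →L[ℝ] EuclideanSpace ℝ (Fin n))
    (hg : HasFDerivAt g D q)
    (v : EuclideanSpace ℝ (Fin n))
    (hv : ∀ x ∈ S, ⟪v, g x - g q⟫ ≤ 0)
    (y : EuclideanSpace ℝ (Fin n)) (hy : y ∈ S) : ⟪v, D (y - q)⟫ ≤ 0 := by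
  set c : ℝ → EuclideanSpace ℝ (Fin n) := fun t => q + t • (y - q) with hc
  have hcd : HasDerivAt c (y - q) 0 := by
    exact (((hasDerivAt_id (0:ℝ)).smul_const (y - q)).const_add q).congr_deriv (by simp)
  have hc0 : c 0 = q := by simp [hc]
  have hgd : HasDerivAt (g ∘ c) (D (y - q)) 0 := by
    refine HasFDerivAt.comp_hasDerivAt 0 ?_ hcd
    rw [hc0]; exact hg
  set h : ℝ → ℝ := fun t => ⟪v, g (c t) - g q⟫ with hh
  have hhd : HasDerivAt h ⟪v, D (y - q)⟫ 0 := by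
    have h1 : HasDerivAt (fun t => ⟪v, g (c t)⟫) ⟪v, D (y - q)⟫ 0 :=
      (innerSL ℝ v).hasFDerivAt.comp_hasDerivAt 0 hgd
    have : HasDerivAt (fun t => ⟪v, g (c t)⟫ - ⟪v, g q⟫) ⟪v, D (y - q)⟫ 0 :=
      h1.sub_const _
    refine this.congr_of_eventuallyEq (Filter.Eventually.of_forall fun t => ?_)
    simp [hh, inner_sub_right]
  have hmem : ∀ t ∈ Set.Ioc (0:ℝ) 1, c t ∈ S := by
    intro t ht
    have : c t = (1 - t) • q + t • y := by
      simp [hc, smul_sub, sub_smul]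
      module
    rw [this]
    exact hS hq hy (by linarith [ht.2]) (le_of_lt ht.1) (by ring)
  have h0 : h 0 = 0 := by simp [hh, hc0]
  have hslope : Filter.Tendsto (slope h 0) (𝓝[>] (0:ℝ)) (𝓝 ⟪v, D (y - q)⟫) := by
    have := (hhd.hasDerivWithinAt (s := Set.Ioi (0:ℝ)))
    rw [hasDerivWithinAt_iff_tendsto_slope] at this
    simpa [Set.diff_eq, Set.Ioi, Set.inter_comm] using this.mono_left
      (nhdsWithin_mono _ (by intro x hx; exact ⟨hx, ne_of_gt hx⟩))
  refine le_of_tendsto hslope ?_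
  filter_upwards [Ioc_mem_nhdsGT_of_mem (Set.mem_Ico.mpr ⟨le_refl (0:ℝ), one_pos⟩)] with t ht
  have ht0 : (0:ℝ) < t := ht.1
  have hneg : h t ≤ 0 := hv _ (hmem t ht)
  have : slope h 0 t = h t / t := by simp [slope_def_field, h0]
  rw [this]
  exact div_nonpos_of_nonpos_of_nonneg hneg ht0.le

theorem stmt_2 (n : ℕ)
    (V W : Set (EuclideanSpace ℝ (Fin n))) (hV : IsOpen V) (hW : IsOpen W)
    (Φ Ψ : EuclideanSpace ℝ (Fin n) → EuclideanSpace ℝ (Fin n))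
    (Φ' : EuclideanSpace ℝ (Fin n) →
      (EuclideanSpace ℝ (Fin n) ≃L[ℝ] EuclideanSpace ℝ (Fin n)))
    -- Φ is a C¹-diffeomorphism of V onto W with inverse Ψ and derivative Φ'
    (hbij : Set.BijOn Φ V W)
    (hinv : Set.InvOn Ψ Φ V W)
    (hd : ∀ x ∈ V, HasFDerivAt Φ (Φ' x : EuclideanSpace ℝ (Fin n) →L[ℝ]
      EuclideanSpace ℝ (Fin n)) x)
    (hdc : ContinuousOn (fun x => (Φ' x : EuclideanSpace ℝ (Fin n) →L[ℝ]
      EuclideanSpace ℝ (Fin n))) V)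
    (Ω : Set (EuclideanSpace ℝ (Fin n))) (hΩV : Ω ⊆ V)
    (hΩconv : Convex ℝ Ω) (hΦΩconv : Convex ℝ (Φ '' Ω))
    (p : EuclideanSpace ℝ (Fin n)) (hp : p ∈ Ω)
    (v : EuclideanSpace ℝ (Fin n)) :
    (∀ x ∈ Ω, ⟪v, x - p⟫ ≤ 0) ↔
      (∀ y ∈ Φ '' Ω,
        ⟪ContinuousLinearMap.adjoint
          ((Φ' p).symm : EuclideanSpace ℝ (Fin n) →L[ℝ]
            EuclideanSpace ℝ (Fin n)) v, y - Φ p⟫ ≤ 0) := by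
  have hpV : p ∈ V := hΩV hp
  have hΨΦ : ∀ x ∈ V, Ψ (Φ x) = x := fun x hx => hinv.1 hx
  have hΨp : Ψ (Φ p) = p := hΨΦ p hpV
  -- strict differentiability at p
  have hstrict : HasStrictFDerivAt Φ ((Φ' p : EuclideanSpace ℝ (Fin n) →L[ℝ]
      EuclideanSpace ℝ (Fin n))) p := by
    refine hasStrictFDerivAt_of_hasFDerivAt_of_continuousAt
      (f' := fun x => (Φ' x : EuclideanSpace ℝ (Fin n) →L[ℝ] EuclideanSpace ℝ (Fin n))) ?_ ?_
    · filter_upwards [hV.mem_nhds hpV] with x hx using hd x hx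
    · exact hdc.continuousAt (hV.mem_nhds hpV)
  set g := hstrict.localInverse Φ (Φ' p) p with hg
  -- Ψ eventually equals the local inverse near Φ p
  have hΨV : ∀ y ∈ W, Ψ y ∈ V := by
    intro y hy
    obtain ⟨x, hx, rfl⟩ := hbij.surjOn hy
    rw [hΨΦ x hx]; exact hx
  have hgV : ∀ᶠ y in 𝓝 (Φ p), g y ∈ V := by
    have := hstrict.localInverse_tendsto
    exact this (hV.mem_nhds hpV)
  have heq : Ψ =ᶠ[𝓝 (Φ p)] g := by
    filter_upwards [hW.mem_nhds (hbij.mapsTo hpV), hstrict.eventually_right_inverse, hgV]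
      with y hyW hyr hygV
    have h1 : Φ (Ψ y) = y := hinv.2 hyW
    exact hbij.injOn (hΨV y hyW) hygV (by rw [h1, hyr])
  have hΨd : HasFDerivAt Ψ (((Φ' p).symm : EuclideanSpace ℝ (Fin n) →L[ℝ]
      EuclideanSpace ℝ (Fin n))) (Φ p) :=
    hstrict.to_localInverse.hasFDerivAt.congr_of_eventuallyEq heq
  have hΦpΩ : Φ p ∈ Φ '' Ω := ⟨p, hp, rfl⟩
  constructor
  · intro hvn y hy
    have hkey := key_lemma (Φ '' Ω) hΦΩconv (Φ p) hΦpΩ Ψ _ hΨd v ?_ y hy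
    · rwa [ContinuousLinearMap.adjoint_inner_left]
    · rintro z ⟨x, hx, rfl⟩
      rw [hΨΦ x (hΩV hx), hΨp]
      exact hvn x hx
  · intro hvn x hx
    have hkey := key_lemma Ω hΩconv p hp Φ _ (hd p hpV)
      (ContinuousLinearMap.adjoint
        (((Φ' p).symm : EuclideanSpace ℝ (Fin n) →L[ℝ] EuclideanSpace ℝ (Fin n)))
        v) ?_ x hx
    · rw [ContinuousLinearMap.adjoint_inner_left] at hkey
      simpa using hkey
    · intro z hz
      exact hvn (Φ z) ⟨z, hz, rfl⟩
end

section
/- Let X ⊆ ℝⁿ, U be a set, G : X × U → X be such that G(·,u) is injective for every u ∈ U, and let ψ denote the general solution of the discrete-time system x_{k+1} = G(x_k, u_k), i.e., ψ(0,x,u) = x and ψ(k+1,x,u) = G(ψ(k,x,u), u_k). Given a sequence of sets Δ₀, Δ₁, …, Δ_N ⊆ ℝⁿ and an input sequence u, define M_k = { ψ(k, x₀, u) : x₀ ∈ X, and ψ(τ, x₀, u) ∈ Δ_τ for all 0 ≤ τ ≤ k }. Then for every k ∈ {0,…,N}, M_k equals the intersection over τ = 0,…,k of the images ψ(τ, X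 ∩ Δ_{k−τ}, u|_{[k−τ, k)}), where ψ(τ, S, v) denotes the pointwise image of S under ψ(τ, ·, v) using the input values v shifted appropriately. -/
theorem stmt_4 (n : ℕ) (U : Type*)
    (X : Set (EuclideanSpace ℝ (Fin n)))
    (G : EuclideanSpace ℝ (Fin n) → U → EuclideanSpace ℝ (Fin n))
    (hGX : ∀ x ∈ X, ∀ u : U, G x u ∈ X)
    (hGinj : ∀ u : U, Function.Injective (fun x => G x u))
    (ψ : ℕ → EuclideanSpace ℝ (Fin n) → (ℕ → U) → EuclideanSpace ℝ (Fin n))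
    (hψ0 : ∀ x u, ψ 0 x u = x)
    (hψs : ∀ k x u, ψ (k + 1) x u = G (ψ k x u) (u k))
    (N : ℕ) (Δ : ℕ → Set (EuclideanSpace ℝ (Fin n))) (u : ℕ → U)
    (M : ℕ → Set (EuclideanSpace ℝ (Fin n)))
    (hM : ∀ k, M k = {y | ∃ x₀ ∈ X, (∀ τ ≤ k, ψ τ x₀ u ∈ Δ τ) ∧ y = ψ k x₀ u}) :
    ∀ k ≤ N,
      M k = ⋂ τ ∈ Finset.range (k + 1),
        (fun x => ψ τ x (fun j => u (k - τ + j))) '' (X ∩ Δ (k - τ)) := by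
  have psi_add : ∀ (b a : ℕ) (x : EuclideanSpace ℝ (Fin n)) (v : ℕ → U),
      ψ (a + b) x v = ψ b (ψ a x v) (fun j => v (a + j)) := by
    intro b
    induction b with
    | zero => intro a x v; simp [hψ0]
    | succ b ih =>
        intro a x v
        have : a + (b + 1) = (a + b) + 1 := by omega
        rw [this, hψs, ih, hψs]
  have psi_X : ∀ (k : ℕ) (x : EuclideanSpace ℝ (Fin n)) (v : ℕ → U),
      x ∈ X → ψ k x v ∈ X := by
    intro k
    induction k with
    | zero => intro x v hx; rw [hψ0]; exact hx
    | succ k ih => intro x v hx; rw [hψs]; exact hGX _ (ih x v hx) _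
  have psi_inj : ∀ (k : ℕ) (v : ℕ → U),
      Function.Injective (fun x => ψ k x v) := by
    intro k
    induction k with
    | zero => intro v x y h; simpa [hψ0] using h
    | succ k ih =>
        intro v x y h
        simp only [hψs] at h
        exact ih v (hGinj (v k) h)
  intro k hk
  ext y
  simp only [hM, Set.mem_setOf_eq, Set.mem_iInter, Finset.mem_range, Set.mem_image,
    Set.mem_inter_iff]
  constructor
  · rintro ⟨x₀, hx₀, hΔ, rfl⟩ τ hτ
    have hτk : τ ≤ k := Nat.lt_succ_iff.mp hτ
    refine ⟨ψ (k - τ) x₀ u, ⟨psi_X _ _ _ hx₀, hΔ _ (Nat.sub_le _ _)⟩, ?_⟩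
    have := psi_add τ (k - τ) x₀ u
    rw [Nat.sub_add_cancel hτk] at this
    exact this.symm
  · intro h
    obtain ⟨z, ⟨hzX, hzΔ⟩, hz⟩ := h k (Nat.lt_succ_self k)
    have hu : (fun j => u (k - k + j)) = u := by
      funext j; simp
    rw [hu] at hz
    refine ⟨z, hzX, ?_, hz.symm⟩
    intro τ hτk
    obtain ⟨w, ⟨hwX, hwΔ⟩, hw⟩ := h (k - τ) (by omega)
    have hsub : k - (k - τ) = τ := Nat.sub_sub_self hτk
    rw [hsub] at hwΔ hw
    have hyy : ψ (k - τ) (ψ τ z u) (fun j => u (τ + j)) = y := by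
      rw [← psi_add, Nat.add_sub_cancel' hτk, hz]
    have := psi_inj (k - τ) (fun j => u (τ + j)) (hw.trans hyy.symm)
    rwa [← this]
end

section
/- Let M ⊆ ℝⁿ be nonempty, and for s > 0 define Θ(s) = ⋂_{x ∈ M} B̄(x, s), the intersection of closed balls of radius s centered at points of M. If r > 0 and Θ(r) contains at least two distinct points, then Θ(s) converges to Θ(r) in Hausdorff distance as s increases to r; that is, for every ε > 0 there exists s₀ < r such that for all s ∈ (s₀, r), Θ(s) is nonempty and the Hausdorff distance between Θ(s) and Θ(r) is less than ε. -/
set_option maxHeartbeats 1000000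

theorem stmt_6 (n : ℕ) (M : Set (EuclideanSpace ℝ (Fin n))) (hM : M.Nonempty)
    (Θ : ℝ → Set (EuclideanSpace ℝ (Fin n)))
    (hΘ : ∀ s, Θ s = ⋂ x ∈ M, Metric.closedBall x s)
    (r : ℝ) (hr : 0 < r)
    (x y : EuclideanSpace ℝ (Fin n)) (hx : x ∈ Θ r) (hy : y ∈ Θ r) (hxy : x ≠ y) :
    ∀ ε > 0, ∃ s₀ ∈ Set.Ioo 0 r, ∀ s ∈ Set.Ioo s₀ r,
      (Θ s).Nonempty ∧ Metric.hausdorffDist (Θ s) (Θ r) < ε := by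
  obtain ⟨p₀, hp₀⟩ := hM
  have hmemr : ∀ z, z ∈ Θ r → ∀ p ∈ M, dist z p ≤ r := by
    intro z hz p hp
    rw [hΘ] at hz
    exact Metric.mem_closedBall.1 (Set.mem_iInter₂.1 hz p hp)
  set m : EuclideanSpace ℝ (Fin n) := (2⁻¹ : ℝ) • (x + y) with hm
  clear_value m
  set d := dist x y with hd
  clear_value d
  have hd0 : 0 < d := by rw [hd]; exact dist_pos.2 hxy
  set s₁ := Real.sqrt (r ^ 2 - d ^ 2 / 4) with hs₁def
  clear_value s₁
  have hs₁0 : 0 ≤ s₁ := by rw [hs₁def]; exact Real.sqrt_nonneg _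
  have hsq : ∀ p ∈ M, dist m p ^ 2 ≤ r ^ 2 - d ^ 2 / 4 := by
    intro p hp
    have hxp : dist x p ≤ r := hmemr x hx p hp
    have hyp : dist y p ≤ r := hmemr y hy p hp
    have par := parallelogram_law_with_norm ℝ (x - p) (y - p)
    have h2 : x - p + (y - p) = (2 : ℝ) • (m - p) := by
      rw [hm]; module
    have e1 : ‖(2 : ℝ) • (m - p)‖ = 2 * ‖m - p‖ := by
      rw [norm_smul]; simp
    have e2 : x - p - (y - p) = x - y := by abel
    rw [h2, e1, e2] at par
    have dx : dist x p = ‖x - p‖ := dist_eq_norm _ _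
    have dy : dist y p = ‖y - p‖ := dist_eq_norm _ _
    have dm : dist m p = ‖m - p‖ := dist_eq_norm _ _
    have dxy : d = ‖x - y‖ := by rw [hd]; exact dist_eq_norm _ _
    rw [dx] at hxp
    rw [dy] at hyp
    rw [dm, dxy]
    nlinarith [par, norm_nonneg (x - p), norm_nonneg (y - p), norm_nonneg (m - p),
      mul_nonneg (sub_nonneg.2 hxp) (sub_nonneg.2 hyp)]
  have hdm : ∀ p ∈ M, dist m p ≤ s₁ := by
    intro p hp
    have := hsq p hp
    calc dist m p = Real.sqrt (dist m p ^ 2) := (Real.sqrt_sq dist_nonneg).symm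
      _ ≤ s₁ := by rw [hs₁def]; exact Real.sqrt_le_sqrt this
  have hnonneg : 0 ≤ r ^ 2 - d ^ 2 / 4 := le_trans (sq_nonneg _) (hsq p₀ hp₀)
  have hs₁r : s₁ < r := by
    have : Real.sqrt (r ^ 2 - d ^ 2 / 4) < Real.sqrt (r ^ 2) :=
      Real.sqrt_lt_sqrt hnonneg (by nlinarith)
    rw [Real.sqrt_sq hr.le] at this
    rwa [hs₁def]
  intro ε hε
  have h2r1 : (0:ℝ) < 2 * r + 1 := by linarith
  set c := 2 * r * ε / (2 * r + 1) with hc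
  clear_value c
  have hc0 : 0 ≤ c := by rw [hc]; positivity
  have hcε : c < ε := by
    rw [hc, div_lt_iff₀ h2r1]; nlinarith
  refine ⟨max (max s₁ (r / 2)) (r - ε * (r - s₁) / (2 * r + 1)), ⟨?_, ?_⟩, ?_⟩
  · have : 0 < r / 2 := by linarith
    calc (0:ℝ) < r / 2 := this
      _ ≤ _ := le_max_of_le_left (le_max_right _ _)
  · apply max_lt (max_lt hs₁r (by linarith))
    have : 0 < ε * (r - s₁) / (2 * r + 1) := by
      apply div_pos (mul_pos hε (by linarith)) h2r1
    linarith
  · rintro s ⟨hs₀s, hsr⟩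
    have hs₁s : s₁ < s := lt_of_le_of_lt (le_max_of_le_left (le_max_left _ _)) hs₀s
    have hgap : r - s < ε * (r - s₁) / (2 * r + 1) := by
      have := lt_of_le_of_lt (le_max_right (max s₁ (r / 2)) _) hs₀s
      linarith
    set t := (r - s) / (r - s₁) with ht
    clear_value t
    have hrs₁ : 0 < r - s₁ := by linarith
    have ht0 : 0 < t := by rw [ht]; exact div_pos (by linarith) hrs₁
    have ht1 : t < 1 := by rw [ht]; exact (div_lt_one hrs₁).2 (by linarith)
    have htmul : t * (r - s₁) = r - s := by rw [ht]; exact div_mul_cancel₀ _ (ne_of_gt hrs₁)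
    have htc : 2 * r * t ≤ c := by
      have : t < ε / (2 * r + 1) := by
        rw [ht, div_lt_div_iff₀ hrs₁ h2r1]
        calc (r - s) * (2 * r + 1) < (ε * (r - s₁) / (2 * r + 1)) * (2 * r + 1) := by
              apply mul_lt_mul_of_pos_right hgap h2r1
          _ = ε * (r - s₁) := by field_simp
      calc 2 * r * t ≤ 2 * r * (ε / (2 * r + 1)) := by nlinarith
        _ = c := by rw [hc]; field_simp
    have hmem_s : ∀ z, (∀ p ∈ M, dist z p ≤ s) → z ∈ Θ s := by
      intro z hz
      rw [hΘ]
      exact Set.mem_iInter₂.2 fun p hp => Metric.mem_closedBall.2 (hz p hp)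
    have hmΘs : m ∈ Θ s := hmem_s m fun p hp => le_trans (hdm p hp) hs₁s.le
    refine ⟨⟨m, hmΘs⟩, ?_⟩
    have hsub : Θ s ⊆ Θ r := by
      rw [hΘ, hΘ]
      exact Set.iInter₂_mono fun p hp => Metric.closedBall_subset_closedBall hsr.le
    have hHD : Metric.hausdorffDist (Θ s) (Θ r) ≤ c := by
      apply Metric.hausdorffDist_le_of_mem_dist hc0
      · intro w hw
        exact ⟨w, hsub hw, by simpa using hc0⟩
      · intro z hz
        refine ⟨z + t • (m - z), ?_, ?_⟩
        · apply hmem_s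
          intro p hp
          have key : z + t • (m - z) - p = (1 - t) • (z - p) + t • (m - p) := by module
          have : dist (z + t • (m - z)) p = ‖(1 - t) • (z - p) + t • (m - p)‖ := by
            rw [dist_eq_norm, key]
          rw [this]
          calc ‖(1 - t) • (z - p) + t • (m - p)‖
              ≤ ‖(1 - t) • (z - p)‖ + ‖t • (m - p)‖ := norm_add_le _ _
            _ = (1 - t) * ‖z - p‖ + t * ‖m - p‖ := by
                rw [norm_smul, norm_smul, Real.norm_eq_abs, Real.norm_eq_abs,
                  abs_of_nonneg (by linarith), abs_of_nonneg ht0.le]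
            _ ≤ (1 - t) * r + t * s₁ := by
                have h1 : ‖z - p‖ ≤ r := by
                  rw [← dist_eq_norm]; exact hmemr z hz p hp
                have h2 : ‖m - p‖ ≤ s₁ := by
                  rw [← dist_eq_norm]; exact hdm p hp
                have : 0 ≤ 1 - t := by linarith
                nlinarith
            _ = s := by linear_combination -htmul
        · have : dist z (z + t • (m - z)) = t * ‖z - m‖ := by
            rw [dist_eq_norm]
            have : z - (z + t • (m - z)) = t • (z - m) := by module
            rw [this, norm_smul, Real.norm_eq_abs, abs_of_nonneg ht0.le]
          rw [this]
          have hzm : ‖z - m‖ ≤ 2 * r := by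
            have h1 : dist z p₀ ≤ r := hmemr z hz p₀ hp₀
            have h2 : dist m p₀ ≤ s₁ := hdm p₀ hp₀
            calc ‖z - m‖ = dist z m := (dist_eq_norm _ _).symm
              _ ≤ dist z p₀ + dist p₀ m := dist_triangle _ _ _
              _ = dist z p₀ + dist m p₀ := by rw [dist_comm p₀ m]
              _ ≤ 2 * r := by linarith
          calc t * ‖z - m‖ ≤ t * (2 * r) := by nlinarith
            _ = 2 * r * t := by ring
            _ ≤ c := htc
    linarith
end

section
/- Let Ω ⊆ ℝⁿ (n ≥ 2) be an r-convex set, i.e., an intersection of a family of closed Euclidean balls of radius r > 0, and assume Ω contains at least two points. Then Ω has nonempty interior. -/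
theorem stmt_7 (n : ℕ) (hn : 2 ≤ n) (r : ℝ) (hr : 0 < r)
    (M Ω : Set (EuclideanSpace ℝ (Fin n)))
    (hΩ : Ω = ⋂ x ∈ M, Metric.closedBall x r)
    (x y : EuclideanSpace ℝ (Fin n)) (hx : x ∈ Ω) (hy : y ∈ Ω) (hxy : x ≠ y) :
    (interior Ω).Nonempty := by
  rcases M.eq_empty_or_nonempty with hM | ⟨z₀, hz₀⟩
  · have : Ω = Set.univ := by simp [hΩ, hM]
    rw [this, interior_univ]
    exact ⟨x, trivial⟩
  set d : ℝ := dist x y with hd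
  have hd0 : 0 < d := dist_pos.mpr hxy
  have hmem : ∀ z ∈ M, x ∈ Metric.closedBall z r ∧ y ∈ Metric.closedBall z r := by
    intro z hz
    rw [hΩ] at hx hy
    exact ⟨Set.mem_iInter₂.mp hx z hz, Set.mem_iInter₂.mp hy z hz⟩
  have hd2r : d ≤ 2 * r := by
    obtain ⟨h1, h2⟩ := hmem z₀ hz₀
    have := dist_triangle x z₀ y
    have h1' : dist x z₀ ≤ r := Metric.mem_closedBall.mp h1
    have h2' : dist z₀ y ≤ r := by
      rw [dist_comm]; exact Metric.mem_closedBall.mp h2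
    linarith
  set ρ : ℝ := d ^ 2 / (8 * r) with hρ
  have hρ0 : 0 < ρ := by positivity
  set m : EuclideanSpace ℝ (Fin n) := midpoint ℝ x y with hm
  have hball : Metric.ball m ρ ⊆ Ω := by
    intro p hp
    rw [hΩ]
    refine Set.mem_iInter₂.mpr fun z hz => ?_
    obtain ⟨h1, h2⟩ := hmem z hz
    have h1' : ‖x - z‖ ≤ r := by
      rw [← dist_eq_norm]; exact Metric.mem_closedBall.mp h1
    have h2' : ‖y - z‖ ≤ r := by
      rw [← dist_eq_norm]; exact Metric.mem_closedBall.mp h2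
    -- parallelogram law
    have hpar := parallelogram_law_with_norm ℝ (x - z) (y - z)
    have hsum : (x - z) + (y - z) = (2 : ℝ) • (m - z) := by
      simp only [hm, midpoint_eq_smul_add, invOf_eq_inv, smul_sub, smul_smul]
      module
    have hdiff : (x - z) - (y - z) = x - y := by abel
    have hnorm_sum : ‖(x - z) + (y - z)‖ = 2 * ‖m - z‖ := by
      rw [hsum, norm_smul]
      simp [Real.norm_eq_abs, abs_of_nonneg]
    rw [hnorm_sum, hdiff] at hpar
    have hxy_norm : ‖x - y‖ = d := by rw [hd, dist_eq_norm]
    rw [hxy_norm] at hpar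
    have hmz_sq : ‖m - z‖ ^ 2 ≤ r ^ 2 - d ^ 2 / 4 := by
      have h1sq : ‖x - z‖ ^ 2 ≤ r ^ 2 := by
        apply sq_le_sq' _ h1'
        linarith [norm_nonneg (x - z)]
      have h2sq : ‖y - z‖ ^ 2 ≤ r ^ 2 := by
        apply sq_le_sq' _ h2'
        linarith [norm_nonneg (y - z)]
      nlinarith [hpar]
    have hmz : ‖m - z‖ ≤ r - ρ := by
      have hr_ρ : 0 ≤ r - ρ := by
        have hd4 : d ^ 2 ≤ 4 * r ^ 2 := by nlinarith
        rw [hρ, sub_nonneg, div_le_iff₀ (by positivity : (0:ℝ) < 8 * r)]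
        nlinarith
      have : ‖m - z‖ ^ 2 ≤ (r - ρ) ^ 2 := by
        have : (r - ρ) ^ 2 = r ^ 2 - d ^ 2 / 4 + d ^ 4 / (64 * r ^ 2) := by
          rw [hρ]; field_simp; ring
        have hpos : (0:ℝ) ≤ d ^ 4 / (64 * r ^ 2) := by positivity
        linarith
      calc ‖m - z‖ = Real.sqrt (‖m - z‖ ^ 2) := by
            rw [Real.sqrt_sq (norm_nonneg _)]
        _ ≤ Real.sqrt ((r - ρ) ^ 2) := Real.sqrt_le_sqrt this
        _ = r - ρ := Real.sqrt_sq hr_ρ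
    have hpm : dist p m < ρ := Metric.mem_ball.mp hp
    refine Metric.mem_closedBall.mpr ?_
    calc dist p z ≤ dist p m + dist m z := dist_triangle p m z
      _ ≤ ρ + (r - ρ) := by
          have : dist m z = ‖m - z‖ := dist_eq_norm m z
          linarith
      _ = r := by ring
  exact ⟨m, interior_maximal hball Metric.isOpen_ball (Metric.mem_ball_self hρ0)⟩
end

section
/- Every r-convex subset Ω of ℝⁿ with at least two points satisfies Ω = closure(interior(Ω)). -/
theorem stmt_8 (n : ℕ) (r : ℝ) (hr : 0 < r)
    (M Ω : Set (EuclideanSpace ℝ (Fin n)))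
    (hΩ : Ω = ⋂ x ∈ M, Metric.closedBall x r)
    (x y : EuclideanSpace ℝ (Fin n)) (hx : x ∈ Ω) (hy : y ∈ Ω) (hxy : x ≠ y) :
    Ω = closure (interior Ω) := by
  have hconv : Convex ℝ Ω := by
    rw [hΩ]
    exact convex_iInter fun c => convex_iInter fun _ => convex_closedBall c r
  have hclosed : IsClosed Ω := by
    rw [hΩ]
    exact isClosed_iInter fun c => isClosed_iInter fun _ => Metric.isClosed_closedBall
  set m := midpoint ℝ x y with hm
  set d := dist x y with hdd
  have hd : 0 < d := dist_pos.2 hxy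
  set s := Real.sqrt (r ^ 2 - d ^ 2 / 4) with hsdef
  have hs_nonneg : 0 ≤ s := Real.sqrt_nonneg _
  have hs_lt : s < r := by
    rw [hsdef, Real.sqrt_lt' hr]
    nlinarith
  -- the ball around the midpoint is inside Ω
  have hball : Metric.ball m (r - s) ⊆ Ω := by
    rw [hΩ]
    refine Set.subset_iInter₂ fun c hc => fun z hz => ?_
    have hxc : dist x c ≤ r := Metric.mem_closedBall.1 (Set.mem_iInter₂.1 (hΩ ▸ hx) c hc)
    have hyc : dist y c ≤ r := Metric.mem_closedBall.1 (Set.mem_iInter₂.1 (hΩ ▸ hy) c hc)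
    have happ := EuclideanGeometry.dist_sq_add_dist_sq_eq_two_mul_dist_midpoint_sq_add_half_dist_sq
      c x y
    rw [← hm, ← hdd] at happ
    have hmc_sq : dist c m ^ 2 ≤ r ^ 2 - d ^ 2 / 4 := by
      nlinarith [dist_nonneg (x := x) (y := c), dist_nonneg (x := y) (y := c),
        dist_comm c x, dist_comm c y]
    have hmc : dist m c ≤ s := by
      rw [dist_comm m c]
      calc dist c m = Real.sqrt (dist c m ^ 2) := (Real.sqrt_sq dist_nonneg).symm
        _ ≤ s := Real.sqrt_le_sqrt hmc_sq
    have hzm : dist z m < r - s := Metric.mem_ball.1 hz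
    have : dist z c < r := by
      calc dist z c ≤ dist z m + dist m c := dist_triangle _ _ _
        _ < (r - s) + s := add_lt_add_of_lt_of_le hzm hmc
        _ = r := by ring
    exact Metric.mem_closedBall.2 this.le
  have hmint : m ∈ interior Ω :=
    mem_interior.2 ⟨Metric.ball m (r - s), hball, Metric.isOpen_ball,
      Metric.mem_ball_self (by linarith)⟩
  refine Set.Subset.antisymm ?_ ?_
  · intro z hz
    by_cases hzm : z = m
    · exact subset_closure (hzm ▸ hmint)
    · have hseg : openSegment ℝ z m ⊆ interior Ω :=
        hconv.openSegment_self_interior_subset_interior hz hmint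
      have : z ∈ closure (openSegment ℝ z m) := by
        rw [closure_openSegment]
        exact left_mem_segment ℝ z m
      exact closure_mono hseg this
  · calc closure (interior Ω) ⊆ closure Ω := closure_mono interior_subset
      _ = Ω := hclosed.closure_eq
end

section
/- Let g : U ⊆ ℝⁿ → ℝ be continuous on the open set U, with g(0) = 0, and assume g is of class C¹ with locally Lipschitz derivative on a neighborhood of 0, with g'(0) surjective (nonzero). Suppose that for every h ∈ ker g'(0) with h ≠ 0, liminf_{t→0⁺} g'(th)h / t > 0. Then the set Ω = { x ∈ U : g(x) ≤ 0 } is weakly supported at 0 locally: there exist a neighborhood V of 0 and a nonzero vector v ∈ ℝⁿ such that ⟨v, x⟩ ≤ 0 for all x ∈ Ω ∩ V. -/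
open scoped RealInnerProductSpace
open Metric Filter Set

set_option maxHeartbeats 1000000 in
theorem stmt_10 (n : ℕ)
    (U : Set (EuclideanSpace ℝ (Fin n))) (hU : IsOpen U) (h0U : (0 : EuclideanSpace ℝ (Fin n)) ∈ U)
    (g : EuclideanSpace ℝ (Fin n) → ℝ) (hgc : ContinuousOn g U) (hg0 : g 0 = 0)
    (g' : EuclideanSpace ℝ (Fin n) → (EuclideanSpace ℝ (Fin n) →L[ℝ] ℝ))
    -- g is C¹ with locally Lipschitz derivative on a neighborhood of 0
    (hd : ∀ᶠ x in nhds (0 : EuclideanSpace ℝ (Fin n)), HasFDerivAt g (g' x) x)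
    (hLip : ∃ (L : NNReal) (W : Set (EuclideanSpace ℝ (Fin n))),
      W ∈ nhds (0 : EuclideanSpace ℝ (Fin n)) ∧ LipschitzOnWith L g' W)
    (hsurj : g' 0 ≠ 0)
    (hpos : ∀ h : EuclideanSpace ℝ (Fin n), g' 0 h = 0 → h ≠ 0 →
      0 < Filter.liminf (fun t : ℝ => g' (t • h) h / t) (nhdsWithin 0 (Set.Ioi 0))) :
    ∃ V ∈ nhds (0 : EuclideanSpace ℝ (Fin n)), ∃ v : EuclideanSpace ℝ (Fin n),
      v ≠ 0 ∧ ∀ x ∈ {x ∈ U | g x ≤ 0} ∩ V, ⟪v, x⟫ ≤ 0 := by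
  classical
  obtain ⟨L, W, hWn, hLipW⟩ := hLip
  have hWev : ∀ᶠ y in nhds (0 : EuclideanSpace ℝ (Fin n)), y ∈ W := hWn
  obtain ⟨r₀, hr₀, hb⟩ := Metric.eventually_nhds_iff.mp (hd.and hWev)
  have hbn : ∀ y : EuclideanSpace ℝ (Fin n), ‖y‖ < r₀ →
      HasFDerivAt g (g' y) y ∧ y ∈ W := fun y hy => hb (by rwa [dist_zero_right])
  have h0r : ‖(0 : EuclideanSpace ℝ (Fin n))‖ < r₀ := by simpa using hr₀
  have hL0 : (0:ℝ) ≤ (L : ℝ) := L.coe_nonneg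
  have hLB : ∀ a : EuclideanSpace ℝ (Fin n), ‖a‖ < r₀ → ∀ b : EuclideanSpace ℝ (Fin n), ‖b‖ < r₀ →
      ‖g' a - g' b‖ ≤ L * ‖a - b‖ := by
    intro a ha b hb'
    have := hLipW.dist_le_mul a (hbn a ha).2 b (hbn b hb').2
    rwa [dist_eq_norm, dist_eq_norm] at this
  -- difference estimate for two unit kernel directions
  have hdiff : ∀ (h₁ h₂ : EuclideanSpace ℝ (Fin n)) (t : ℝ), ‖h₁‖ = 1 → ‖h₂‖ = 1 →
      g' 0 h₁ = 0 → g' 0 h₂ = 0 → 0 < t → t < r₀ →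
      |g' (t • h₁) h₁ - g' (t • h₂) h₂| ≤ 2 * L * t * ‖h₁ - h₂‖ := by
    intro h₁ h₂ t n1 n2 k1 k2 ht htr
    have hm1 : ‖t • h₁‖ < r₀ := by
      rw [norm_smul, n1, Real.norm_eq_abs, abs_of_pos ht, mul_one]; exact htr
    have hm2 : ‖t • h₂‖ < r₀ := by
      rw [norm_smul, n2, Real.norm_eq_abs, abs_of_pos ht, mul_one]; exact htr
    have e1 : g' (t • h₁) h₁ - g' (t • h₂) h₂
        = (g' (t • h₁) - g' (t • h₂)) h₁ + (g' (t • h₂) - g' 0) (h₁ - h₂) := by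
      simp only [ContinuousLinearMap.sub_apply, map_sub, k1, k2]
      ring
    have b1 : |(g' (t • h₁) - g' (t • h₂)) h₁| ≤ L * t * ‖h₁ - h₂‖ := by
      have hop := (g' (t • h₁) - g' (t • h₂)).le_opNorm h₁
      rw [n1, mul_one] at hop
      have h2 := hLB _ hm1 _ hm2
      have e2 : ‖t • h₁ - t • h₂‖ = t * ‖h₁ - h₂‖ := by
        rw [← smul_sub, norm_smul, Real.norm_eq_abs, abs_of_pos ht]
      rw [← Real.norm_eq_abs]
      calc ‖(g' (t • h₁) - g' (t • h₂)) h₁‖ ≤ ‖g' (t • h₁) - g' (t • h₂)‖ := hop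
        _ ≤ L * ‖t • h₁ - t • h₂‖ := h2
        _ = L * t * ‖h₁ - h₂‖ := by rw [e2]; ring
    have b2 : |(g' (t • h₂) - g' 0) (h₁ - h₂)| ≤ L * t * ‖h₁ - h₂‖ := by
      have hop := (g' (t • h₂) - g' 0).le_opNorm (h₁ - h₂)
      have h2 := hLB _ hm2 0 h0r
      have e2 : ‖t • h₂ - (0 : EuclideanSpace ℝ (Fin n))‖ = t := by
        rw [sub_zero, norm_smul, n2, Real.norm_eq_abs, abs_of_pos ht, mul_one]
      rw [e2] at h2
      rw [← Real.norm_eq_abs]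
      calc ‖(g' (t • h₂) - g' 0) (h₁ - h₂)‖ ≤ ‖g' (t • h₂) - g' 0‖ * ‖h₁ - h₂‖ := hop
        _ ≤ (L * t) * ‖h₁ - h₂‖ := by
            exact mul_le_mul_of_nonneg_right h2 (norm_nonneg _)
        _ = L * t * ‖h₁ - h₂‖ := by ring
    calc |g' (t • h₁) h₁ - g' (t • h₂) h₂|
        = |(g' (t • h₁) - g' (t • h₂)) h₁ + (g' (t • h₂) - g' 0) (h₁ - h₂)| := by rw [e1]
      _ ≤ |(g' (t • h₁) - g' (t • h₂)) h₁| + |(g' (t • h₂) - g' 0) (h₁ - h₂)| := abs_add_le _ _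
      _ ≤ L * t * ‖h₁ - h₂‖ + L * t * ‖h₁ - h₂‖ := add_le_add b1 b2
      _ = 2 * L * t * ‖h₁ - h₂‖ := by ring
  -- uniform positivity of g'(t h) h on the kernel sphere
  have key : ∃ c : ℝ, 0 < c ∧ ∃ δ : ℝ, 0 < δ ∧ δ ≤ r₀ ∧
      ∀ h : EuclideanSpace ℝ (Fin n), ‖h‖ = 1 → g' 0 h = 0 →
        ∀ t : ℝ, 0 < t → t < δ → c * t ≤ g' (t • h) h := by
    set S : Set (EuclideanSpace ℝ (Fin n)) := {h | ‖h‖ = 1 ∧ g' 0 h = 0} with hSdef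
    rcases Set.eq_empty_or_nonempty S with hS | hS
    · refine ⟨1, one_pos, r₀, hr₀, le_refl _, fun h hn hk t ht htr => ?_⟩
      exact absurd (show h ∈ S from ⟨hn, hk⟩) (by rw [hS]; exact Set.notMem_empty h)
    have hScl : IsClosed S := (isClosed_eq continuous_norm continuous_const).inter
        (isClosed_eq (g' 0).continuous continuous_const)
    have hSbd : Bornology.IsBounded S := by
      apply (Metric.isBounded_closedBall (x := (0 : EuclideanSpace ℝ (Fin n))) (r := 1)).subset
      intro h hh
      rw [Metric.mem_closedBall, dist_zero_right, hh.1]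
    have hScomp : IsCompact S := Metric.isCompact_of_isClosed_isBounded hScl hSbd
    have hdata : ∀ i : S, ∃ c : ℝ, 0 < c ∧ ∃ ε : ℝ, 0 < ε ∧ ∃ δ : ℝ, 0 < δ ∧ δ ≤ r₀ ∧
        ∀ h' : EuclideanSpace ℝ (Fin n), ‖h'‖ = 1 → g' 0 h' = 0 →
          ‖h' - (i : EuclideanSpace ℝ (Fin n))‖ < ε →
          ∀ t : ℝ, 0 < t → t < δ → c * t ≤ g' (t • h') h' := by
      rintro ⟨i, hi1, hi2⟩
      have hine : i ≠ 0 := by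
        intro h0; rw [h0] at hi1; simp at hi1
      set ℓ := Filter.liminf (fun t : ℝ => g' (t • i) i / t) (nhdsWithin 0 (Set.Ioi 0)) with hℓdef
      have hℓpos : 0 < ℓ := hpos i hi2 hine
      have hIoo : Set.Ioo (0:ℝ) r₀ ∈ nhdsWithin (0:ℝ) (Set.Ioi 0) :=
        Ioo_mem_nhdsGT_of_mem ⟨le_refl 0, hr₀⟩
      have hbdd : Filter.IsBoundedUnder (· ≥ ·) (nhdsWithin (0:ℝ) (Set.Ioi 0))
          (fun t : ℝ => g' (t • i) i / t) := by
        refine ⟨-(L : ℝ), ?_⟩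
        rw [Filter.eventually_map]
        filter_upwards [hIoo] with t ht
        have hm : ‖t • i‖ < r₀ := by
          rw [norm_smul, hi1, Real.norm_eq_abs, abs_of_pos ht.1, mul_one]; exact ht.2
        have heq : g' (t • i) i = (g' (t • i) - g' 0) i := by
          simp [ContinuousLinearMap.sub_apply, hi2]
        have habs : |g' (t • i) i| ≤ L * t := by
          rw [heq, ← Real.norm_eq_abs]
          have hop := (g' (t • i) - g' 0).le_opNorm i
          rw [hi1, mul_one] at hop
          have h2 := hLB _ hm 0 h0r
          have e2 : ‖t • i - (0 : EuclideanSpace ℝ (Fin n))‖ = t := by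
            rw [sub_zero, norm_smul, hi1, Real.norm_eq_abs, abs_of_pos ht.1, mul_one]
          rw [e2] at h2
          exact le_trans hop h2
        have h1 : -((L:ℝ) * t) ≤ g' (t • i) i := (abs_le.mp habs).1
        rw [ge_iff_le, le_div_iff₀ ht.1]
        linarith
      have hev := Filter.eventually_lt_of_lt_liminf (show ℓ/2 < ℓ by linarith) hbdd
      obtain ⟨ε, hε, hsub⟩ := Metric.mem_nhdsWithin_iff.mp (Filter.eventually_iff.mp (hev.and hIoo))
      refine ⟨ℓ/4, by linarith, ℓ/(8*((L:ℝ)+1)), by positivity, min ε r₀,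
        lt_min hε hr₀, min_le_right _ _, ?_⟩
      intro h' n' k' hcl t ht htδ
      have htε : t < ε := lt_of_lt_of_le htδ (min_le_left _ _)
      have htr : t < r₀ := lt_of_lt_of_le htδ (min_le_right _ _)
      have hmem := hsub ⟨by rw [mem_ball, dist_zero_right, Real.norm_eq_abs, abs_of_pos ht]; exact htε, ht⟩
      have h1 : ℓ/2 * t < g' (t • i) i := (lt_div_iff₀ ht).mp hmem.1
      have h2 := hdiff h' i t n' hi1 k' hi2 ht htr
      have h3 : -(2 * (L:ℝ) * t * ‖h' - i‖) ≤ g' (t • h') h' - g' (t • i) i := (abs_le.mp h2).1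
      have h4 : 2 * (L:ℝ) * t * ‖h' - i‖ ≤ 2 * (L:ℝ) * t * (ℓ/(8*((L:ℝ)+1))) := by
        apply mul_le_mul_of_nonneg_left hcl.le
        positivity
      have h5 : 2 * (L:ℝ) * t * (ℓ/(8*((L:ℝ)+1))) ≤ ℓ/4 * t := by
        rw [show 2 * (L:ℝ) * t * (ℓ/(8*((L:ℝ)+1))) = (ℓ/4 * t) * ((L:ℝ)/((L:ℝ)+1)) by
          field_simp; ring]
        have hle : (L:ℝ)/((L:ℝ)+1) ≤ 1 := by
          rw [div_le_one (by linarith)]; linarith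
        have hpos' : (0:ℝ) ≤ ℓ/4 * t := by positivity
        nlinarith
      linarith
    choose c hc ε hε δ hδ hδr hmain using hdata
    have hcov : S ⊆ ⋃ i : S, ball (i : EuclideanSpace ℝ (Fin n)) (ε i) := by
      intro x hx
      exact Set.mem_iUnion.mpr ⟨⟨x, hx⟩, mem_ball_self (hε ⟨x, hx⟩)⟩
    obtain ⟨F, hF⟩ := hScomp.elim_finite_subcover _ (fun i => isOpen_ball) hcov
    obtain ⟨x₀, hx₀⟩ := hS
    obtain ⟨i₀, hi₀F, _⟩ : ∃ i ∈ F, x₀ ∈ ball (i : EuclideanSpace ℝ (Fin n)) (ε i) := by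
      have := hF hx₀
      simpa only [Set.mem_iUnion, exists_prop] using this
    have hFne : F.Nonempty := ⟨i₀, hi₀F⟩
    refine ⟨F.inf' hFne c, (Finset.lt_inf'_iff hFne).mpr (fun i _ => hc i),
      F.inf' hFne δ, (Finset.lt_inf'_iff hFne).mpr (fun i _ => hδ i),
      le_trans (Finset.inf'_le δ hi₀F) (hδr i₀), ?_⟩
    intro h hn hk t ht htδ
    obtain ⟨i, hiF, hib⟩ : ∃ i ∈ F, h ∈ ball (i : EuclideanSpace ℝ (Fin n)) (ε i) := by
      have := hF (show h ∈ S from ⟨hn, hk⟩)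
      simpa only [Set.mem_iUnion, exists_prop] using this
    have h1 := hmain i h hn hk (by rwa [mem_ball, dist_eq_norm] at hib) t ht
        (lt_of_lt_of_le htδ (Finset.inf'_le δ hiF))
    exact le_trans (mul_le_mul_of_nonneg_right (Finset.inf'_le c hiF) ht.le) h1
  obtain ⟨c₀, hc₀, δ₀, hδ₀, hδ₀r, hkey⟩ := key
  -- the normal vector
  set v : EuclideanSpace ℝ (Fin n) :=
    (InnerProductSpace.toDual ℝ (EuclideanSpace ℝ (Fin n))).symm (g' 0) with hvdef
  have hv : ∀ x : EuclideanSpace ℝ (Fin n), ⟪v, x⟫ = g' 0 x := fun x =>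
    InnerProductSpace.toDual_symm_apply
  have hvne : v ≠ 0 := by
    intro h0
    apply hsurj
    ext x
    have := hv x
    rw [h0, inner_zero_left] at this
    simpa using this.symm
  have hvpos : 0 < ‖v‖ := norm_pos_iff.mpr hvne
  set ρ : ℝ := min δ₀ (min (r₀/2) (‖v‖/(4*((L:ℝ)+1)))) with hρdef
  have hρpos : 0 < ρ := lt_min hδ₀ (lt_min (by linarith) (by positivity))
  refine ⟨ball 0 ρ, ball_mem_nhds _ hρpos, v, hvne, ?_⟩
  rintro x ⟨⟨hxU, hgx⟩, hxV⟩
  by_contra hcon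
  push_neg at hcon
  have hxnorm : ‖x‖ < ρ := by rwa [mem_ball, dist_zero_right] at hxV
  set s : ℝ := ⟪v, x⟫ with hsdef
  have hs : 0 < s := hcon
  have hvv : ⟪v, v⟫ = ‖v‖^2 := real_inner_self_eq_norm_sq v
  set w : EuclideanSpace ℝ (Fin n) := (s * (‖v‖^2)⁻¹) • v with hwdef
  set h : EuclideanSpace ℝ (Fin n) := x - w with hhdef
  have hvw : ⟪v, w⟫ = s := by
    rw [hwdef, real_inner_smul_right, hvv]
    field_simp
  have hkh : g' 0 h = 0 := by
    rw [← hv, hhdef, inner_sub_right, hvw, hsdef, sub_self]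
  have hvh : ⟪h, w⟫ = 0 := by
    rw [hwdef, real_inner_smul_right, real_inner_comm, hv, hkh, mul_zero]
  have hx_eq : x = h + w := by rw [hhdef]; abel
  have hhx : ‖h‖ ≤ ‖x‖ := by
    have hns := norm_add_sq_real h w
    rw [← hx_eq, hvh] at hns
    have h2 : ‖h‖^2 ≤ ‖x‖^2 := by nlinarith [sq_nonneg ‖w‖]
    exact (pow_le_pow_iff_left₀ (norm_nonneg h) (norm_nonneg x) two_ne_zero).mp h2
  have hwx : ‖w‖ ≤ ‖x‖ := by
    have hwn : ‖w‖ = s / ‖v‖ := by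
      rw [hwdef, norm_smul, Real.norm_eq_abs, abs_of_pos (by positivity)]
      field_simp
    rw [hwn, div_le_iff₀ hvpos]
    calc s = ⟪v, x⟫ := rfl
      _ ≤ ‖v‖ * ‖x‖ := real_inner_le_norm v x
      _ = ‖x‖ * ‖v‖ := by ring
  -- Step B : g h ≥ 0  (in fact > 0 unless h = 0)
  have hgh : 0 ≤ g h := by
    rcases eq_or_ne h 0 with h0 | h0
    · rw [h0, hg0]
    have ht : 0 < ‖h‖ := norm_pos_iff.mpr h0
    have htδ : ‖h‖ < δ₀ := lt_of_le_of_lt hhx (lt_of_lt_of_le hxnorm (min_le_left _ _))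
    set t : ℝ := ‖h‖ with htdef
    set eh : EuclideanSpace ℝ (Fin n) := t⁻¹ • h with hunitdef
    have hunitn : ‖eh‖ = 1 := by
      rw [hunitdef, norm_smul, Real.norm_eq_abs, abs_of_pos (by positivity), ← htdef]
      field_simp
    have hunitk : g' 0 eh = 0 := by
      rw [hunitdef, map_smul, hkh, smul_zero]
    set ψ : ℝ → ℝ := fun σ => g (σ • eh) with hψdef
    have hψd : ∀ σ ∈ Set.Icc (0:ℝ) t, HasDerivAt ψ (g' (σ • eh) eh) σ := by
      intro σ hσ
      have hin : ‖σ • eh‖ < r₀ := by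
        rw [norm_smul, hunitn, mul_one, Real.norm_eq_abs, abs_of_nonneg hσ.1]
        exact lt_of_le_of_lt hσ.2 (lt_of_lt_of_le htδ hδ₀r)
      have hlin : HasDerivAt (fun σ' : ℝ => σ' • eh) eh σ := by
        simpa using (hasDerivAt_id σ).smul_const eh
      exact ((hbn _ hin).1).comp_hasDerivAt σ hlin
    have hmono : StrictMonoOn ψ (Set.Icc 0 t) := by
      apply strictMonoOn_of_deriv_pos (convex_Icc 0 t)
      · intro σ hσ
        exact (hψd σ hσ).continuousAt.continuousWithinAt
      · intro σ hσ
        rw [interior_Icc] at hσ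
        rw [(hψd σ ⟨hσ.1.le, hσ.2.le⟩).deriv]
        have := hkey eh hunitn hunitk σ hσ.1 (lt_trans hσ.2 htδ)
        nlinarith [mul_pos hc₀ hσ.1]
    have hlt := hmono (Set.left_mem_Icc.mpr ht.le) (Set.right_mem_Icc.mpr ht.le) ht
    have hth : t • eh = h := by
      rw [hunitdef, smul_smul]
      rw [mul_inv_cancel₀ ht.ne', one_smul]
    have hψ0 : ψ 0 = 0 := by simp [hψdef, hg0]
    have hψt : ψ t = g h := by rw [hψdef]; simp only; rw [hth]
    rw [hψ0, hψt] at hlt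
    exact hlt.le
  -- Step C : g x > g h since the derivative in the direction w is positive
  have hseg : ∀ τ : ℝ, τ ∈ Set.Icc (0:ℝ) 1 → ‖h + τ • w‖ ≤ 2 * ‖x‖ := by
    intro τ hτ
    calc ‖h + τ • w‖ ≤ ‖h‖ + ‖τ • w‖ := norm_add_le _ _
      _ = ‖h‖ + τ * ‖w‖ := by rw [norm_smul, Real.norm_eq_abs, abs_of_nonneg hτ.1]
      _ ≤ ‖x‖ + 1 * ‖x‖ := by
          apply add_le_add hhx
          apply mul_le_mul hτ.2 hwx (norm_nonneg _) zero_le_one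
      _ = 2 * ‖x‖ := by ring
  have hρr : ρ ≤ r₀/2 := le_trans (min_le_right _ _) (min_le_left _ _)
  have hρv : ρ ≤ ‖v‖/(4*((L:ℝ)+1)) := le_trans (min_le_right _ _) (min_le_right _ _)
  have hgyv : ∀ y : EuclideanSpace ℝ (Fin n), ‖y‖ ≤ 2*‖x‖ → 0 < g' y v := by
    intro y hy
    have hy' : ‖y‖ < r₀ := by linarith
    have hb1 : ‖g' y - g' 0‖ ≤ L * ‖y‖ := by
      have := hLB y hy' 0 h0r
      rwa [sub_zero] at this
    have hb2 : |(g' y - g' 0) v| ≤ (L * ‖y‖) * ‖v‖ := by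
      rw [← Real.norm_eq_abs]
      exact le_trans ((g' y - g' 0).le_opNorm v)
        (mul_le_mul_of_nonneg_right hb1 (norm_nonneg v))
    have hyv : ‖y‖ < ‖v‖/(2*((L:ℝ)+1)) := by
      have h2 : (2:ℝ) * (‖v‖/(4*((L:ℝ)+1))) = ‖v‖/(2*((L:ℝ)+1)) := by
        field_simp
        ring
      linarith
    have h3 : (L:ℝ) * ‖y‖ * ‖v‖ < ‖v‖^2 := by
      have h4 : ‖y‖ * (2*((L:ℝ)+1)) < ‖v‖ := (lt_div_iff₀ (by positivity)).mp hyv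
      nlinarith [mul_lt_mul_of_pos_right h4 hvpos, mul_nonneg (norm_nonneg y) (norm_nonneg v), hL0]
    have he : g' y v = g' 0 v + (g' y - g' 0) v := by
      simp [ContinuousLinearMap.sub_apply]
    have hg0v : g' 0 v = ‖v‖^2 := by rw [← hv, hvv]
    have := (abs_le.mp hb2).1
    rw [he, hg0v]
    linarith
  set θ : ℝ → ℝ := fun τ => g (h + τ • w) with hθdef
  have hθd : ∀ τ ∈ Set.Icc (0:ℝ) 1, HasDerivAt θ (g' (h + τ • w) w) τ := by
    intro τ hτ
    have hin : ‖h + τ • w‖ < r₀ := by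
      have := hseg τ hτ
      linarith [hxnorm, hρr]
    have hlin : HasDerivAt (fun τ' : ℝ => h + τ' • w) w τ := by
      simpa using ((hasDerivAt_id τ).smul_const w).const_add h
    exact ((hbn _ hin).1).comp_hasDerivAt τ hlin
  have hθmono : StrictMonoOn θ (Set.Icc 0 1) := by
    apply strictMonoOn_of_deriv_pos (convex_Icc 0 1)
    · intro τ hτ
      exact (hθd τ hτ).continuousAt.continuousWithinAt
    · intro τ hτ
      rw [interior_Icc] at hτ
      rw [(hθd τ ⟨hτ.1.le, hτ.2.le⟩).deriv]
      have hval : g' (h + τ • w) w = (s * (‖v‖^2)⁻¹) * g' (h + τ • w) v := by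
        rw [hwdef, map_smul, smul_eq_mul]
      rw [hval]
      have := hgyv (h + τ • w) (hseg τ ⟨hτ.1.le, hτ.2.le⟩)
      have hcoef : 0 < s * (‖v‖^2)⁻¹ := by positivity
      exact mul_pos hcoef this
  have hlt := hθmono (Set.left_mem_Icc.mpr zero_le_one) (Set.right_mem_Icc.mpr zero_le_one) one_pos
  have hθ0 : θ 0 = g h := by simp [hθdef]
  have hθ1 : θ 1 = g x := by rw [hθdef]; simp only [one_smul]; rw [← hx_eq]
  rw [hθ0, hθ1] at hlt
  linarith
end

section
/- Let Ω ⊆ ℝⁿ be r-convex, compact, and let x be a boundary point of Ω with v a unit-length normal to Ω at x. Then Ω ⊆ B̄(x − r v, r), the closed ball of radius r centered at x − r v. -/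
open scoped RealInnerProductSpace

set_option maxHeartbeats 1000000

theorem stmt_12 (n : ℕ) (r : ℝ) (hr : 0 < r)
    (M Ω : Set (EuclideanSpace ℝ (Fin n)))
    (hΩ : Ω = ⋂ z ∈ M, Metric.closedBall z r)
    (hcpt : IsCompact Ω)
    (x : EuclideanSpace ℝ (Fin n)) (hx : x ∈ frontier Ω)
    (v : EuclideanSpace ℝ (Fin n)) (hv : ‖v‖ = 1)
    (hnormal : ∀ y ∈ Ω, ⟪v, y - x⟫ ≤ 0) :
    Ω ⊆ Metric.closedBall (x - r • v) r := by
  have hxΩ : x ∈ Ω := by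
    have h1 := frontier_subset_closure hx
    rwa [hcpt.isClosed.closure_eq] at h1
  intro y hy
  set D : ℝ := ‖y - x‖ with hD
  set I : ℝ := ⟪v, y - x⟫ with hI
  -- key estimate
  have key : ∀ L : ℝ, 0 ≤ L → L < 1 → I ≤ -(L * D ^ 2) / (2 * r) := by
    intro L hL0 hL1
    set t : ℝ := L * (1 - L) * D ^ 2 / (2 * r) with ht
    have ht0 : 0 ≤ t := by
      have : (0:ℝ) ≤ 1 - L := by linarith
      positivity
    clear_value t
    have hmem : x + (1 - L) • (y - x) + t • v ∈ Ω := by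
      rw [hΩ]
      refine Set.mem_iInter₂.mpr fun z hz => ?_
      have hxz : ‖x - z‖ ≤ r := by
        have h2 : x ∈ ⋂ z ∈ M, Metric.closedBall z r := hΩ ▸ hxΩ
        have := Set.mem_iInter₂.mp h2 z hz
        simpa [Metric.mem_closedBall, dist_eq_norm] using this
      have hyz : ‖y - z‖ ≤ r := by
        have h2 : y ∈ ⋂ z ∈ M, Metric.closedBall z r := hΩ ▸ hy
        have := Set.mem_iInter₂.mp h2 z hz
        simpa [Metric.mem_closedBall, dist_eq_norm] using this
      -- parallelogram estimate on the convex combination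
      have hc : ‖(x + (1 - L) • (y - x)) - z‖ ^ 2
          = L * ‖x - z‖ ^ 2 + (1 - L) * ‖y - z‖ ^ 2 - L * (1 - L) * D ^ 2 := by
        have e1 : (x + (1 - L) • (y - x)) - z = L • (x - z) + (1 - L) • (y - z) := by
          module
        have e2 : y - x = (y - z) - (x - z) := by abel
        rw [e1, hD, e2]
        rw [← real_inner_self_eq_norm_sq, ← real_inner_self_eq_norm_sq,
          ← real_inner_self_eq_norm_sq, ← real_inner_self_eq_norm_sq]
        simp only [inner_add_left, inner_add_right, inner_sub_left, inner_sub_right,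
          real_inner_smul_left, real_inner_smul_right]
        ring_nf
      have tri : ‖(x + (1 - L) • (y - x) + t • v) - z‖
          ≤ ‖(x + (1 - L) • (y - x)) - z‖ + t := by
        have e3 : (x + (1 - L) • (y - x) + t • v) - z
            = ((x + (1 - L) • (y - x)) - z) + t • v := by module
        rw [e3]
        have : ‖t • v‖ = t := by
          rw [norm_smul, hv, mul_one, Real.norm_eq_abs, abs_of_nonneg ht0]
        calc ‖((x + (1 - L) • (y - x)) - z) + t • v‖
            ≤ ‖(x + (1 - L) • (y - x)) - z‖ + ‖t • v‖ := norm_add_le _ _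
          _ = ‖(x + (1 - L) • (y - x)) - z‖ + t := by rw [this]
      simp only [Metric.mem_closedBall, dist_eq_norm]
      set C : ℝ := ‖(x + (1 - L) • (y - x)) - z‖ with hC
      have hC0 : 0 ≤ C := norm_nonneg _
      clear_value C
      have hs : C ^ 2 ≤ r ^ 2 - L * (1 - L) * D ^ 2 := by
        have hA : ‖x - z‖ ^ 2 ≤ r ^ 2 := by nlinarith [norm_nonneg (x - z)]
        have hB : ‖y - z‖ ^ 2 ≤ r ^ 2 := by nlinarith [norm_nonneg (y - z)]
        nlinarith [hc, hL0, hL1.le]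
      have hsle : L * (1 - L) * D ^ 2 ≤ r ^ 2 := by nlinarith [sq_nonneg C]
      have h2rt : 2 * r * t = L * (1 - L) * D ^ 2 := by
        rw [ht]; field_simp
      have htle : t ≤ r / 2 := by nlinarith
      have hrt0 : r / 2 ≤ r - t := by linarith
      have hsq : C ^ 2 ≤ (r - t) ^ 2 := by nlinarith [sq_nonneg t]
      have hCle : C ≤ r - t := by
        nlinarith [hsq, hC0, hrt0, hr]
      linarith [tri, hCle]
    -- apply the normal condition
    have hn := hnormal _ hmem
    have e4 : (x + (1 - L) • (y - x) + t • v) - x = (1 - L) • (y - x) + t • v := by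
      module
    rw [e4, inner_add_right, real_inner_smul_right, real_inner_smul_right,
      real_inner_self_eq_norm_sq, hv] at hn
    -- hn : (1 - L) * I + t * 1 ^ 2 ≤ 0
    have h1L : (0:ℝ) < 1 - L := by linarith
    have h2rt : 2 * r * t = L * (1 - L) * D ^ 2 := by
      rw [ht]; field_simp
    rw [le_div_iff₀ (by linarith : (0:ℝ) < 2 * r)]
    nlinarith [hn, h2rt, h1L, mul_nonneg (mul_nonneg hL0 h1L.le) (sq_nonneg D)]
  -- conclude via λ → 1
  have main : D ^ 2 + 2 * r * I ≤ 0 := by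
    by_contra h
    push_neg at h
    have hI0 : I ≤ 0 := by
      have := key 0 le_rfl (by norm_num)
      simpa using this
    have hD0 : 0 < D ^ 2 := by nlinarith
    have hμ0 : 0 ≤ -(2 * r * I) / D ^ 2 := by
      apply div_nonneg _ hD0.le
      nlinarith
    have hμ1 : -(2 * r * I) / D ^ 2 < 1 := by
      rw [div_lt_one hD0]
      nlinarith
    have hk := key ((1 + -(2 * r * I) / D ^ 2) / 2) (by linarith) (by linarith)
    rw [le_div_iff₀ (by linarith : (0:ℝ) < 2 * r)] at hk
    have hfs : -(2 * r * I) / D ^ 2 * D ^ 2 = -(2 * r * I) := by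
      exact div_mul_cancel₀ _ hD0.ne'
    nlinarith [hk, hfs]
  -- turn into ball membership
  simp only [Metric.mem_closedBall, dist_eq_norm]
  have e5 : y - (x - r • v) = (y - x) + r • v := by module
  rw [e5]
  have hsq : ‖(y - x) + r • v‖ ^ 2 ≤ r ^ 2 := by
    have h1 : ‖(y - x) + r • v‖ ^ 2 = D ^ 2 + 2 * r * I + r ^ 2 := by
      rw [← real_inner_self_eq_norm_sq]
      simp only [inner_add_left, inner_add_right, real_inner_smul_left,
        real_inner_smul_right]
      rw [real_inner_self_eq_norm_sq, real_inner_self_eq_norm_sq, hv]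
      have hcomm : ⟪y - x, v⟫ = I := by rw [hI, real_inner_comm]
      rw [hcomm, ← hD]
      ring
    rw [h1]
    linarith [main]
  nlinarith [norm_nonneg ((y - x) + r • v), hsq]
end

section
/- Let Φ : U → V be a C¹,¹-diffeomorphism between open subsets of ℝⁿ (n ≥ 2), and let Ω ⊆ U be r-convex with Ω ≠ ℝⁿ. Assume that for each boundary point x of Ω there is a unit-length normal v to Ω at x such that for all ξ ⊥ v with ξ ≠ 0, limsup_{t→0⁺} ⟨v, Φ'(x)⁻¹(Φ'(x + tξ) − Φ'(x))ξ⟩ / t < ‖ξ‖²/r. Then Φ(Ω) is convex. -/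
open scoped RealInnerProductSpace
open Set Metric Filter Topology

set_option linter.unusedVariables false
set_option linter.unusedSectionVars false

section aux
variable {E : Type*} [NormedAddCommGroup E] [InnerProductSpace ℝ E]

lemma aux_combo_norm' (a b : E) (l : ℝ) :
    ‖a + l • (b - a)‖ ^ 2 = (1 - l) * ‖a‖ ^ 2 + l * ‖b‖ ^ 2 - l * (1 - l) * ‖a - b‖ ^ 2 := by
  have e1 : ‖a + l • (b - a)‖ ^ 2 = ‖a‖ ^ 2 + 2 * (l * ⟪a, b - a⟫) + l ^ 2 * ‖b - a‖ ^ 2 := by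
    rw [@norm_add_sq_real, real_inner_smul_right, norm_smul]
    simp only [Real.norm_eq_abs, mul_pow, sq_abs]
  have e2 : ‖a - b‖ ^ 2 = ‖a‖ ^ 2 - 2 * ⟪a, b⟫ + ‖b‖ ^ 2 := by
    rw [@norm_sub_sq_real]
  have e3 : ‖b - a‖ ^ 2 = ‖b‖ ^ 2 - 2 * ⟪a, b⟫ + ‖a‖ ^ 2 := by
    rw [@norm_sub_sq_real, real_inner_comm]
  have e4 : ⟪a, b - a⟫ = ⟪a, b⟫ - ‖a‖ ^ 2 := by
    rw [inner_sub_right, real_inner_self_eq_norm_sq]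
  rw [e1, e2, e3, e4]; ring

lemma aux_combo_norm (x y z : E) (l : ℝ) :
    ‖x + l • (y - x) - z‖ ^ 2
      = (1 - l) * ‖x - z‖ ^ 2 + l * ‖y - z‖ ^ 2 - l * (1 - l) * ‖x - y‖ ^ 2 := by
  have h1 : x + l • (y - x) - z = (x - z) + l • ((y - z) - (x - z)) := by module
  have h2 : x - y = (x - z) - (y - z) := by abel
  rw [h1, h2, aux_combo_norm']


/-- sharp supporting ball estimate for r-convex sets -/
lemma aux_support {Ω M : Set E} {r : ℝ} (hr : 0 < r)
    (hΩ : Ω = ⋂ z ∈ M, Metric.closedBall z r) (hM : M.Nonempty)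
    {x v : E} (hx : x ∈ Ω) (hv1 : ‖v‖ = 1) (hvn : ∀ y ∈ Ω, ⟪v, y - x⟫ ≤ 0) :
    ∀ y ∈ Ω, ⟪v, y - x⟫ ≤ -‖y - x‖ ^ 2 / (2 * r) := by
  have hmem : ∀ w : E, w ∈ Ω ↔ ∀ z ∈ M, ‖w - z‖ ≤ r := by
    intro w
    simp [hΩ, Set.mem_iInter, Metric.mem_closedBall, dist_eq_norm]
  intro y hy
  set D := ‖y - x‖ ^ 2 with hD
  have hD0 : 0 ≤ D := by positivity
  set ip := ⟪v, y - x⟫ with hip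
  have key : ∀ l : ℝ, l ∈ Set.Ioo (0:ℝ) 1 → ip ≤ -((1 - l) * D) / (2 * r) := by
    intro l hl
    obtain ⟨hl0, hl1⟩ := hl
    set q := l * (1 - l) * D with hq
    have hq0 : 0 ≤ q := by
      have : (0:ℝ) ≤ 1 - l := by linarith
      positivity
    obtain ⟨z₀, hz₀⟩ := hM
    have hb : ∀ z ∈ M, ‖x + l • (y - x) - z‖ ^ 2 ≤ r ^ 2 - q := by
      intro z hz
      have h1 : ‖x - z‖ ≤ r := (hmem x).1 hx z hz
      have h2 : ‖y - z‖ ≤ r := (hmem y).1 hy z hz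
      have ha2 : ‖x - z‖ ^ 2 ≤ r ^ 2 := by nlinarith [norm_nonneg (x - z)]
      have hb2 : ‖y - z‖ ^ 2 ≤ r ^ 2 := by nlinarith [norm_nonneg (y - z)]
      have hyx : ‖x - y‖ ^ 2 = D := by rw [hD, norm_sub_rev]
      rw [aux_combo_norm, hyx, hq]
      nlinarith
    have hqr : q ≤ r ^ 2 := by
      have := hb z₀ hz₀
      nlinarith [sq_nonneg ‖x + l • (y - x) - z₀‖]
    set u := Real.sqrt (r ^ 2 - q) with hu
    have hu2 : u ^ 2 = r ^ 2 - q := Real.sq_sqrt (by linarith)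
    have hu0 : 0 ≤ u := Real.sqrt_nonneg _
    have hur : u ≤ r := by nlinarith
    have hp : x + l • (y - x) + (r - u) • v ∈ Ω := by
      rw [hmem]
      intro z hz
      have h3 : ‖x + l • (y - x) - z‖ ≤ u := by
        have h5 := hb z hz
        have h4 : ‖x + l • (y - x) - z‖ = Real.sqrt (‖x + l • (y - x) - z‖ ^ 2) :=
          (Real.sqrt_sq (norm_nonneg _)).symm
        rw [h4, hu]
        exact Real.sqrt_le_sqrt h5
      calc ‖x + l • (y - x) + (r - u) • v - z‖
          = ‖(x + l • (y - x) - z) + (r - u) • v‖ := by rw [add_sub_right_comm]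
        _ ≤ ‖x + l • (y - x) - z‖ + ‖(r - u) • v‖ := norm_add_le _ _
        _ ≤ u + (r - u) := by
            rw [norm_smul, hv1, Real.norm_eq_abs, abs_of_nonneg (by linarith), mul_one]
            linarith
        _ = r := by ring
    have hn := hvn _ hp
    have h5 : (x + l • (y - x) + (r - u) • v) - x = l • (y - x) + (r - u) • v := by abel
    rw [h5, inner_add_right, real_inner_smul_right, real_inner_smul_right,
      real_inner_self_eq_norm_sq, hv1, one_pow, mul_one, ← hip] at hn
    -- hn : l * ip + (r - u) ≤ 0
    have hru : q ≤ (r - u) * (2 * r) := by nlinarith [sq_nonneg (r - u)]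
    -- so l * ip * (2 * r) ≤ -q
    have h6 : l * ip * (2 * r) ≤ -q := by nlinarith
    rw [le_div_iff₀ (by positivity : (0:ℝ) < 2 * r)]
    have h7 : l * (ip * (2 * r)) ≤ l * (-((1 - l) * D)) := by
      rw [hq] at h6; nlinarith
    exact le_of_mul_le_mul_left h7 hl0
  -- take l → 0
  have hfin : ∀ ε > (0:ℝ), ip ≤ -D / (2 * r) + ε := by
    intro ε hε
    set l := min (1/2 : ℝ) (ε * (2 * r) / (D + 1)) with hldef
    have hl0 : 0 < l := by
      apply lt_min (by norm_num)
      positivity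
    have hl1 : l < 1 := lt_of_le_of_lt (min_le_left _ _) (by norm_num)
    have h := key l ⟨hl0, hl1⟩
    have h1 : l ≤ ε * (2 * r) / (D + 1) := min_le_right _ _
    rw [le_div_iff₀ (by positivity)] at h1
    have hlD : l * D / (2 * r) ≤ ε := by
      rw [div_le_iff₀ (by positivity : (0:ℝ) < 2 * r)]
      nlinarith
    have heq : -((1 - l) * D) / (2 * r) = -D / (2 * r) + l * D / (2 * r) := by ring
    rw [heq] at h
    linarith
  by_contra hcon
  push_neg at hcon
  obtain ⟨ε, hε, hlt⟩ : ∃ ε > (0:ℝ), -D / (2*r) + ε < ip :=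
    ⟨(ip - (-D / (2*r)))/2, by linarith, by linarith⟩
  exact absurd (hfin ε hε) (not_le.mpr hlt)

/-- a nondegenerate r-convex set has interior points -/
lemma aux_interior {Ω M : Set E} {r : ℝ} (hr : 0 < r)
    (hΩ : Ω = ⋂ z ∈ M, Metric.closedBall z r)
    {a b : E} (ha : a ∈ Ω) (hb : b ∈ Ω) (hab : a ≠ b) :
    (interior Ω).Nonempty := by
  rcases Set.eq_empty_or_nonempty M with hM | hM
  · refine ⟨a, ?_⟩
    have : Ω = Set.univ := by simp [hΩ, hM]
    simp [this]
  obtain ⟨z₀, hz₀⟩ := hM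
  have hmem : ∀ w : E, w ∈ Ω ↔ ∀ z ∈ M, ‖w - z‖ ≤ r := by
    intro w
    simp [hΩ, Set.mem_iInter, Metric.mem_closedBall, dist_eq_norm]
  set e := ‖a - b‖ ^ 2 / 4 with he
  have he0 : 0 < e := by
    have : a - b ≠ 0 := sub_ne_zero_of_ne hab
    have h2 : 0 < ‖a - b‖ := norm_pos_iff.mpr this
    positivity
  set m := a + (2⁻¹ : ℝ) • (b - a) with hm
  have hmz : ∀ z ∈ M, ‖m - z‖ ^ 2 ≤ r ^ 2 - e := by
    intro z hz
    have h1 : ‖a - z‖ ≤ r := (hmem a).1 ha z hz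
    have h2 : ‖b - z‖ ≤ r := (hmem b).1 hb z hz
    have ha2 : ‖a - z‖ ^ 2 ≤ r ^ 2 := by nlinarith [norm_nonneg (a - z)]
    have hb2 : ‖b - z‖ ^ 2 ≤ r ^ 2 := by nlinarith [norm_nonneg (b - z)]
    rw [hm, aux_combo_norm, he]
    nlinarith
  have her : e ≤ r ^ 2 := by
    nlinarith [hmz z₀ hz₀, sq_nonneg ‖m - z₀‖]
  set u := Real.sqrt (r ^ 2 - e) with hu
  have hu2 : u ^ 2 = r ^ 2 - e := Real.sq_sqrt (by linarith)
  have hu0 : 0 ≤ u := Real.sqrt_nonneg _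
  have hur : u < r := by nlinarith
  have hball : Metric.ball m (r - u) ⊆ Ω := by
    intro w hw
    rw [Metric.mem_ball, dist_eq_norm] at hw
    rw [hmem]
    intro z hz
    have h3 : ‖m - z‖ ≤ u := by
      have h5 := hmz z hz
      have h4 : ‖m - z‖ = Real.sqrt (‖m - z‖ ^ 2) := (Real.sqrt_sq (norm_nonneg _)).symm
      rw [h4, hu]
      exact Real.sqrt_le_sqrt h5
    calc ‖w - z‖ = ‖(w - m) + (m - z)‖ := by rw [sub_add_sub_cancel]
      _ ≤ ‖w - m‖ + ‖m - z‖ := norm_add_le _ _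
      _ ≤ (r - u) + u := by linarith
      _ = r := by ring
  exact ⟨m, interior_maximal hball Metric.isOpen_ball (Metric.mem_ball_self (by linarith))⟩

/-- inverse continuity on a compact set -/
lemma aux_invcont {Ω : Set E} (hc : IsCompact Ω) {Φ : E → E}
    (hcont : ContinuousOn Φ Ω) (hinj : Set.InjOn Φ Ω) {x : E} (hx : x ∈ Ω)
    {δ : ℝ} (hδ : 0 < δ) :
    ∃ δ' > 0, ∀ y ∈ Ω, ‖Φ y - Φ x‖ < δ' → ‖y - x‖ < δ := by
  by_contra hcon
  push_neg at hcon
  have hseq : ∀ k : ℕ, ∃ y ∈ Ω, ‖Φ y - Φ x‖ < 1 / (k + 1) ∧ δ ≤ ‖y - x‖ := by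
    intro k
    obtain ⟨y, hy, h1, h2⟩ := hcon (1 / (k + 1)) (by positivity)
    exact ⟨y, hy, h1, h2⟩
  choose y hyΩ hy1 hy2 using hseq
  obtain ⟨yb, hybΩ, φ, hφ, hlim⟩ := hc.tendsto_subseq hyΩ
  have hΦlim : Tendsto (fun k => Φ (y (φ k))) atTop (𝓝 (Φ yb)) := by
    have hcw : ContinuousWithinAt Φ Ω yb := hcont yb hybΩ
    exact hcw.tendsto.comp (tendsto_nhdsWithin_iff.2 ⟨hlim, Eventually.of_forall fun k => hyΩ _⟩)
  have hΦlim2 : Tendsto (fun k => Φ (y (φ k))) atTop (𝓝 (Φ x)) := by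
    rw [tendsto_iff_norm_sub_tendsto_zero]
    apply squeeze_zero (fun k => norm_nonneg _) (fun k => (hy1 (φ k)).le)
    have h0 : Tendsto (fun k : ℕ => 1 / ((k : ℝ) + 1)) atTop (𝓝 0) :=
      tendsto_one_div_add_atTop_nhds_zero_nat
    exact h0.comp (hφ.tendsto_atTop)
  have heq : yb = x := hinj hybΩ hx (tendsto_nhds_unique hΦlim hΦlim2)
  have : Tendsto (fun k => ‖y (φ k) - x‖) atTop (𝓝 0) := by
    rw [← heq]
    exact (tendsto_iff_norm_sub_tendsto_zero.1 hlim)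
  have hge : (0:ℝ) ≥ δ := ge_of_tendsto this (Eventually.of_forall fun k => hy2 (φ k))
  linarith

variable [CompleteSpace E]

/-- images of open subsets are open -/
lemma aux_open {U : Set E} (hU : IsOpen U) {Φ : E → E} {Φ' : E → E ≃L[ℝ] E}
    (hd : ∀ x ∈ U, HasFDerivAt Φ (Φ' x : E →L[ℝ] E) x)
    (hlip : ∀ x ∈ U, ∃ (L : NNReal) (W : Set E),
      W ∈ nhds x ∧ LipschitzOnWith L (fun y => (Φ' y : E →L[ℝ] E)) W)
    {s : Set E} (hs : IsOpen s) (hsU : s ⊆ U) : IsOpen (Φ '' s) := by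
  rw [isOpen_iff_mem_nhds]
  rintro z ⟨y, hy, rfl⟩
  obtain ⟨L, W, hW, hL⟩ := hlip y (hsU hy)
  have hcont : ContinuousAt (fun w => (Φ' w : E →L[ℝ] E)) y :=
    (hL.continuousOn).continuousAt hW
  have hder : ∀ᶠ w in 𝓝 y, HasFDerivAt Φ (Φ' w : E →L[ℝ] E) w :=
    Filter.eventually_of_mem (hU.mem_nhds (hsU hy)) hd
  have hstrict : HasStrictFDerivAt Φ ((Φ' y : E →L[ℝ] E)) y :=
    hasStrictFDerivAt_of_hasFDerivAt_of_continuousAt hder hcont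
  have hmap : Filter.map Φ (𝓝 y) = 𝓝 (Φ y) := hstrict.map_nhds_eq_of_equiv
  rw [← hmap, Filter.mem_map]
  exact Filter.mem_of_superset (hs.mem_nhds hy) (Set.subset_preimage_image Φ s)

variable [FiniteDimensional ℝ E]

lemma aux_unif {U : Set E} (hU : IsOpen U) {Φ : E → E} {Φ' : E → E ≃L[ℝ] E}
    {L : NNReal} {W : Set E} {x : E} (hxU : x ∈ U) (hW : W ∈ 𝓝 x)
    (hL : LipschitzOnWith L (fun y => (Φ' y : E →L[ℝ] E)) W)
    {ρ : ℝ} (hρ0 : 0 < ρ) (hρW : Metric.closedBall x ρ ⊆ W)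
    {r : ℝ} (hr : 0 < r) {v : E} (hv1 : ‖v‖ = 1)
    (hlim : ∀ ξ : E, ⟪ξ, v⟫ = 0 → ξ ≠ 0 →
      Filter.limsup (fun t : ℝ =>
          ⟪v, (Φ' x).symm (Φ' (x + t • ξ) ξ - Φ' x ξ)⟫ / t)
        (nhdsWithin 0 (Set.Ioi 0)) < ‖ξ‖ ^ 2 / r) :
    ∃ c t₀ : ℝ, 0 ≤ c ∧ c < 1/r ∧ 0 < t₀ ∧ t₀ ≤ ρ ∧
      ∀ ξ : E, ‖ξ‖ = 1 → ⟪ξ, v⟫ = 0 → ∀ t ∈ Set.Ioo (0:ℝ) t₀,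
        ⟪v, (Φ' x).symm (Φ' (x + t • ξ) ξ - Φ' x ξ)⟫ ≤ c * t := by
  classical
  set A : E →L[ℝ] E := ((Φ' x).symm : E →L[ℝ] E) with hA
  set CB : ℝ := ‖A‖ * (L : ℝ) with hCB
  have hCB0 : 0 ≤ CB := by positivity
  -- pointwise inner product bound
  have gb : ∀ z : E, ⟪v, (Φ' x).symm z⟫ ≤ ‖v‖ * (‖A‖ * ‖z‖) := by
    intro z
    have h1 : ⟪v, (Φ' x).symm z⟫ ≤ ‖v‖ * ‖(Φ' x).symm z‖ := real_inner_le_norm _ _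
    have h2 : ‖(Φ' x).symm z‖ = ‖A z‖ := rfl
    have h3 : ‖A z‖ ≤ ‖A‖ * ‖z‖ := A.le_opNorm z
    calc ⟪v, (Φ' x).symm z⟫ ≤ ‖v‖ * ‖(Φ' x).symm z‖ := h1
      _ = ‖v‖ * ‖A z‖ := by rw [h2]
      _ ≤ ‖v‖ * (‖A‖ * ‖z‖) := by
          apply mul_le_mul_of_nonneg_left h3 (norm_nonneg v)
  -- operator Lipschitz bound
  have lip2 : ∀ a ∈ Metric.closedBall x ρ, ∀ b ∈ Metric.closedBall x ρ, ∀ ζ : E,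
      ‖Φ' a ζ - Φ' b ζ‖ ≤ (L : ℝ) * ‖a - b‖ * ‖ζ‖ := by
    intro a ha b hb ζ
    have h1 : dist ((Φ' a : E →L[ℝ] E)) ((Φ' b : E →L[ℝ] E)) ≤ (L:ℝ) * dist a b :=
      hL.dist_le_mul a (hρW ha) b (hρW hb)
    have h2 : Φ' a ζ - Φ' b ζ = ((Φ' a : E →L[ℝ] E) - (Φ' b : E →L[ℝ] E)) ζ := by
      simp [ContinuousLinearMap.sub_apply]
    rw [h2]
    calc ‖((Φ' a : E →L[ℝ] E) - (Φ' b : E →L[ℝ] E)) ζ‖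
        ≤ ‖(Φ' a : E →L[ℝ] E) - (Φ' b : E →L[ℝ] E)‖ * ‖ζ‖ :=
          ContinuousLinearMap.le_opNorm _ _
      _ ≤ (L:ℝ) * ‖a - b‖ * ‖ζ‖ := by
          have := h1
          rw [dist_eq_norm, dist_eq_norm] at this
          exact mul_le_mul_of_nonneg_right this (norm_nonneg ζ)

  -- per-point eventual bound from the limsup hypothesis
  have hpt : ∀ ξ : E, ∃ cξ tξ : ℝ, cξ < 1/r ∧ 0 < tξ ∧ tξ ≤ ρ ∧
      (‖ξ‖ = 1 → ⟪ξ, v⟫ = 0 → ∀ t ∈ Set.Ioo (0:ℝ) tξ,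
        ⟪v, (Φ' x).symm (Φ' (x + t • ξ) ξ - Φ' x ξ)⟫ ≤ cξ * t) := by
    intro ξ
    by_cases hξ : ‖ξ‖ = 1 ∧ ⟪ξ, v⟫ = 0
    · obtain ⟨hξ1, hξ2⟩ := hξ
      have hξ0 : ξ ≠ 0 := by
        intro h0; rw [h0, norm_zero] at hξ1; norm_num at hξ1
      have hls := hlim ξ hξ2 hξ0
      rw [hξ1, one_pow] at hls
      set f : ℝ → ℝ := fun t =>
        ⟪v, (Φ' x).symm (Φ' (x + t • ξ) ξ - Φ' x ξ)⟫ / t with hf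
      set cξ : ℝ := (Filter.limsup f (nhdsWithin 0 (Set.Ioi 0)) + 1/r)/2 with hcξ
      have hcξ1 : Filter.limsup f (nhdsWithin 0 (Set.Ioi 0)) < cξ := by
        rw [hcξ]; linarith
      have hcξ2 : cξ < 1/r := by rw [hcξ]; linarith
      have hbdd : Filter.IsBoundedUnder (· ≤ ·) (nhdsWithin (0:ℝ) (Set.Ioi 0)) f := by
        apply Filter.isBoundedUnder_of_eventually_le (a := ‖v‖ * CB)
        filter_upwards [Ioo_mem_nhdsGT_of_mem (Set.left_mem_Ico.2 hρ0)] with t ht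
        obtain ⟨ht0, htρ⟩ := ht
        have hmem1 : x + t • ξ ∈ Metric.closedBall x ρ := by
          rw [Metric.mem_closedBall, dist_eq_norm, add_sub_cancel_left, norm_smul,
            Real.norm_eq_abs, abs_of_pos ht0, hξ1, mul_one]
          linarith
        have hmem2 : x ∈ Metric.closedBall x ρ := Metric.mem_closedBall_self hρ0.le
        have h1 : ⟪v, (Φ' x).symm (Φ' (x + t • ξ) ξ - Φ' x ξ)⟫ ≤ ‖v‖ * (‖A‖ * ((L:ℝ) * t)) := by
          have h2 := gb (Φ' (x + t • ξ) ξ - Φ' x ξ)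
          have h3 : ‖Φ' (x + t • ξ) ξ - Φ' x ξ‖ ≤ (L:ℝ) * t := by
            have h4 := lip2 _ hmem1 _ hmem2 ξ
            rw [add_sub_cancel_left, norm_smul, Real.norm_eq_abs, abs_of_pos ht0, hξ1] at h4
            calc ‖Φ' (x + t • ξ) ξ - Φ' x ξ‖ ≤ (L:ℝ) * (t * 1) * 1 := h4
              _ = (L:ℝ) * t := by ring
          calc ⟪v, (Φ' x).symm (Φ' (x + t • ξ) ξ - Φ' x ξ)⟫
              ≤ ‖v‖ * (‖A‖ * ‖Φ' (x + t • ξ) ξ - Φ' x ξ‖) := h2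
            _ ≤ ‖v‖ * (‖A‖ * ((L:ℝ) * t)) := by
                apply mul_le_mul_of_nonneg_left _ (norm_nonneg v)
                exact mul_le_mul_of_nonneg_left h3 (norm_nonneg _)
        rw [hf]
        show _ / t ≤ ‖v‖ * CB
        rw [div_le_iff₀ ht0]
        calc ⟪v, (Φ' x).symm (Φ' (x + t • ξ) ξ - Φ' x ξ)⟫
            ≤ ‖v‖ * (‖A‖ * ((L:ℝ) * t)) := h1
          _ = ‖v‖ * CB * t := by rw [hCB]; ring
      have hev := Filter.eventually_lt_of_limsup_lt hcξ1 hbdd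
      rw [Filter.eventually_iff] at hev
      rw [mem_nhdsGT_iff_exists_Ioo_subset] at hev
      obtain ⟨u, hu, hsub⟩ := hev
      refine ⟨cξ, min u ρ, hcξ2, lt_min hu hρ0, min_le_right _ _, ?_⟩
      intro _ _ t ht
      obtain ⟨ht0, htm⟩ := ht
      have htu : t ∈ Set.Ioo (0:ℝ) u := ⟨ht0, lt_of_lt_of_le htm (min_le_left _ _)⟩
      have := hsub htu
      rw [Set.mem_setOf_eq, hf] at this
      rw [div_lt_iff₀ ht0] at this
      linarith
    · exact ⟨0, ρ, by positivity, hρ0, le_rfl, fun h1 h2 => absurd ⟨h1, h2⟩ hξ⟩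
  
  choose cf tf hc1 ht0 htρ hcf using hpt
  set εf : E → ℝ := fun ξ => (1/r - cf ξ)/(4*(CB+1)) with hεf
  have hεf0 : ∀ ξ, 0 < εf ξ := by
    intro ξ
    have := hc1 ξ
    rw [hεf]
    have h1 : 0 < 1/r - cf ξ := by linarith
    positivity
  -- the compact sphere of admissible directions
  set S : Set E := {ξ : E | ‖ξ‖ = 1 ∧ ⟪ξ, v⟫ = 0} with hS
  have hScomp : IsCompact S := by
    have h1 : S = Metric.sphere (0:E) 1 ∩ {ξ : E | ⟪ξ, v⟫ = 0} := by
      ext ξ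
      simp [hS, mem_sphere_zero_iff_norm]
    rw [h1]
    apply (isCompact_sphere (0:E) 1).inter_right
    have h2 : Continuous fun ξ : E => ⟪ξ, v⟫ := continuous_id.inner continuous_const
    exact isClosed_eq h2 continuous_const
  obtain ⟨F, hFS, hFcov⟩ := hScomp.elim_nhds_subcover
    (fun ξ => Metric.ball ξ (εf ξ)) (fun ξ _ => Metric.ball_mem_nhds _ (hεf0 ξ))
  -- equi-Lipschitz estimate in the direction variable
  have helip : ∀ ξ η : E, ‖ξ‖ = 1 → ‖η‖ = 1 → ∀ t ∈ Set.Ioo (0:ℝ) ρ,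
      ⟪v, (Φ' x).symm (Φ' (x + t • ξ) ξ - Φ' x ξ)⟫
        ≤ ⟪v, (Φ' x).symm (Φ' (x + t • η) η - Φ' x η)⟫ + ‖v‖ * (2*CB*t*‖ξ - η‖) := by
    intro ξ η hξ1 hη1 t ht
    obtain ⟨ht0, htρ2⟩ := ht
    have hmemξ : x + t • ξ ∈ Metric.closedBall x ρ := by
      rw [Metric.mem_closedBall, dist_eq_norm, add_sub_cancel_left, norm_smul,
        Real.norm_eq_abs, abs_of_pos ht0, hξ1, mul_one]
      linarith
    have hmemη : x + t • η ∈ Metric.closedBall x ρ := by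
      rw [Metric.mem_closedBall, dist_eq_norm, add_sub_cancel_left, norm_smul,
        Real.norm_eq_abs, abs_of_pos ht0, hη1, mul_one]
      linarith
    have hmemx : x ∈ Metric.closedBall x ρ := Metric.mem_closedBall_self hρ0.le
    have hdec : (Φ' (x + t • ξ) ξ - Φ' x ξ) - (Φ' (x + t • η) η - Φ' x η)
        = (Φ' (x + t • ξ) ξ - Φ' (x + t • η) ξ) + (Φ' (x + t • η) (ξ - η) - Φ' x (ξ - η)) := by
      have e1 : Φ' (x + t • η) (ξ - η) = Φ' (x + t • η) ξ - Φ' (x + t • η) η :=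
        map_sub _ _ _
      have e2 : Φ' x (ξ - η) = Φ' x ξ - Φ' x η := map_sub _ _ _
      rw [e1, e2]; abel
    have hb1 : ‖Φ' (x + t • ξ) ξ - Φ' (x + t • η) ξ‖ ≤ (L:ℝ) * (t * ‖ξ - η‖) := by
      have h4 := lip2 _ hmemξ _ hmemη ξ
      have e3 : (x + t • ξ) - (x + t • η) = t • (ξ - η) := by module
      rw [e3, norm_smul, Real.norm_eq_abs, abs_of_pos ht0, hξ1] at h4
      calc ‖Φ' (x + t • ξ) ξ - Φ' (x + t • η) ξ‖ ≤ (L:ℝ) * (t * ‖ξ - η‖) * 1 := h4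
        _ = (L:ℝ) * (t * ‖ξ - η‖) := by ring
    have hb2 : ‖Φ' (x + t • η) (ξ - η) - Φ' x (ξ - η)‖ ≤ (L:ℝ) * (t * ‖ξ - η‖) := by
      have h4 := lip2 _ hmemη _ hmemx (ξ - η)
      rw [add_sub_cancel_left, norm_smul, Real.norm_eq_abs, abs_of_pos ht0, hη1] at h4
      calc ‖Φ' (x + t • η) (ξ - η) - Φ' x (ξ - η)‖ ≤ (L:ℝ) * (t * 1) * ‖ξ - η‖ := h4
        _ = (L:ℝ) * (t * ‖ξ - η‖) := by ring
    have h5 : ⟪v, (Φ' x).symm ((Φ' (x + t • ξ) ξ - Φ' x ξ) - (Φ' (x + t • η) η - Φ' x η))⟫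
        = ⟪v, (Φ' x).symm (Φ' (x + t • ξ) ξ - Φ' x ξ)⟫
          - ⟪v, (Φ' x).symm (Φ' (x + t • η) η - Φ' x η)⟫ := by
      rw [map_sub ((Φ' x).symm : E ≃L[ℝ] E), inner_sub_right]
    have h6 := gb ((Φ' (x + t • ξ) ξ - Φ' x ξ) - (Φ' (x + t • η) η - Φ' x η))
    have h7 : ‖(Φ' (x + t • ξ) ξ - Φ' x ξ) - (Φ' (x + t • η) η - Φ' x η)‖
        ≤ 2 * (L:ℝ) * (t * ‖ξ - η‖) := by
      rw [hdec]
      calc ‖(Φ' (x + t • ξ) ξ - Φ' (x + t • η) ξ) + (Φ' (x + t • η) (ξ - η) - Φ' x (ξ - η))‖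
          ≤ ‖Φ' (x + t • ξ) ξ - Φ' (x + t • η) ξ‖ + ‖Φ' (x + t • η) (ξ - η) - Φ' x (ξ - η)‖ :=
            norm_add_le _ _
        _ ≤ 2 * (L:ℝ) * (t * ‖ξ - η‖) := by linarith
    have h8 : ⟪v, (Φ' x).symm ((Φ' (x + t • ξ) ξ - Φ' x ξ) - (Φ' (x + t • η) η - Φ' x η))⟫
        ≤ ‖v‖ * (2*CB*t*‖ξ - η‖) := by
      calc ⟪v, (Φ' x).symm ((Φ' (x + t • ξ) ξ - Φ' x ξ) - (Φ' (x + t • η) η - Φ' x η))⟫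
          ≤ ‖v‖ * (‖A‖ * ‖(Φ' (x + t • ξ) ξ - Φ' x ξ) - (Φ' (x + t • η) η - Φ' x η)‖) := h6
        _ ≤ ‖v‖ * (‖A‖ * (2 * (L:ℝ) * (t * ‖ξ - η‖))) := by
            apply mul_le_mul_of_nonneg_left _ (norm_nonneg v)
            exact mul_le_mul_of_nonneg_left h7 (norm_nonneg _)
        _ = ‖v‖ * (2*CB*t*‖ξ - η‖) := by rw [hCB]; ring
    rw [h5] at h8
    linarith
  
  rcases Finset.eq_empty_or_nonempty F with hFe | hFne
  · -- no admissible directions at all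
    refine ⟨0, ρ, le_rfl, by positivity, hρ0, le_rfl, ?_⟩
    intro ξ h1 h2 t ht
    exfalso
    have : ξ ∈ S := ⟨h1, h2⟩
    have := hFcov this
    rw [hFe] at this
    simpa using this
  · set c₀ : ℝ := F.sup' hFne (fun ξ => cf ξ + 2*CB*(εf ξ)) with hc₀
    set c : ℝ := max c₀ 0 with hc
    set t₀ : ℝ := min (F.inf' hFne tf) ρ with ht₀
    have hcr : c < 1/r := by
      rw [hc]
      apply max_lt _ (by positivity)
      rw [hc₀, Finset.sup'_lt_iff]
      intro i hi
      have h1 := hc1 i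
      have h2 : 2*CB*(εf i) ≤ (1/r - cf i)/2 := by
        have h3 : 0 < 1/r - cf i := by linarith
        have h4 : εf i = (1/r - cf i)/(4*(CB+1)) := by rw [hεf]
        have h5 : (4*(CB+1)) * (εf i) = 1/r - cf i := by
          rw [h4]; field_simp
        have h6 := hεf0 i
        nlinarith
      linarith
    have ht₀0 : 0 < t₀ := by
      rw [ht₀]
      apply lt_min _ hρ0
      rw [Finset.lt_inf'_iff]
      intro i _
      exact ht0 i
    refine ⟨c, t₀, le_max_right _ _, hcr, ht₀0, min_le_right _ _, ?_⟩
    intro ξ h1 h2 t ht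
    obtain ⟨hT0, hTt₀⟩ := ht
    have hξS : ξ ∈ S := ⟨h1, h2⟩
    have := hFcov hξS
    rw [Set.mem_iUnion₂] at this
    obtain ⟨i, hiF, hib⟩ := this
    obtain ⟨hi1, hi2⟩ := hFS i hiF
    have hdist : ‖ξ - i‖ < εf i := by
      rw [← dist_eq_norm]
      exact hib
    have hti : t ∈ Set.Ioo (0:ℝ) (tf i) := by
      refine ⟨hT0, lt_of_lt_of_le hTt₀ ?_⟩
      calc t₀ ≤ F.inf' hFne tf := min_le_left _ _
        _ ≤ tf i := Finset.inf'_le _ hiF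
    have hbi := hcf i hi1 hi2 t hti
    have htρ3 : t ∈ Set.Ioo (0:ℝ) ρ := ⟨hT0, lt_of_lt_of_le hTt₀ (min_le_right _ _)⟩
    have helip2 := helip ξ i h1 hi1 t htρ3
    rw [hv1, one_mul] at helip2
    have hsup : cf i + 2*CB*(εf i) ≤ c₀ :=
      Finset.le_sup' (fun ξ => cf ξ + 2*CB*(εf ξ)) hiF
    have hc0c : c₀ ≤ c := le_max_left _ _
    calc ⟪v, (Φ' x).symm (Φ' (x + t • ξ) ξ - Φ' x ξ)⟫
        ≤ ⟪v, (Φ' x).symm (Φ' (x + t • i) i - Φ' x i)⟫ + 2*CB*t*‖ξ - i‖ := helip2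
      _ ≤ cf i * t + 2*CB*t*(εf i) := by
          have h9 : 2*CB*t*‖ξ - i‖ ≤ 2*CB*t*(εf i) := by
            apply mul_le_mul_of_nonneg_left hdist.le
            positivity
          linarith
      _ = (cf i + 2*CB*(εf i)) * t := by ring
      _ ≤ c * t := by
          apply mul_le_mul_of_nonneg_right _ hT0.le
          linarith

set_option maxHeartbeats 1000000 in
lemma aux_key {U : Set E} (hU : IsOpen U) {Φ : E → E} {Φ' : E → E ≃L[ℝ] E}
    (hd : ∀ x ∈ U, HasFDerivAt Φ (Φ' x : E →L[ℝ] E) x)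
    {L : NNReal} {W : Set E} {x : E} (hxU : x ∈ U) (hW : W ∈ 𝓝 x)
    (hL : LipschitzOnWith L (fun y => (Φ' y : E →L[ℝ] E)) W)
    {r : ℝ} (hr : 0 < r) {v : E} (hv1 : ‖v‖ = 1)
    (hlim : ∀ ξ : E, ⟪ξ, v⟫ = 0 → ξ ≠ 0 →
      Filter.limsup (fun t : ℝ =>
          ⟪v, (Φ' x).symm (Φ' (x + t • ξ) ξ - Φ' x ξ)⟫ / t)
        (nhdsWithin 0 (Set.Ioi 0)) < ‖ξ‖ ^ 2 / r)
    {Ω : Set E}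
    (hsupp : ∀ y ∈ Ω, ⟪v, y - x⟫ ≤ -‖y - x‖ ^ 2 / (2*r)) :
    ∃ δ > 0, ∀ y ∈ Ω, ‖y - x‖ < δ → y ≠ x →
      ⟪v, (Φ' x).symm (Φ y - Φ x)⟫ < 0 := by
  classical
  have hWU : W ∩ U ∈ 𝓝 x := Filter.inter_mem hW (hU.mem_nhds hxU)
  obtain ⟨ε, hε0, hεsub⟩ := Metric.mem_nhds_iff.1 hWU
  set ρ : ℝ := ε/2 with hρdef
  have hρ0 : 0 < ρ := by positivity
  have hρball : Metric.closedBall x ρ ⊆ W ∩ U :=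
    le_trans (Metric.closedBall_subset_ball (by rw [hρdef]; linarith)) hεsub
  have hρW : Metric.closedBall x ρ ⊆ W := fun z hz => (hρball hz).1
  have hρU : Metric.closedBall x ρ ⊆ U := fun z hz => (hρball hz).2
  obtain ⟨c, t₀, hc0, hcr, ht₀0, ht₀ρ, hunif⟩ :=
    aux_unif (Φ := Φ) hU hxU hW hL hρ0 hρW hr hv1 hlim
  set A : E →L[ℝ] E := ((Φ' x).symm : E →L[ℝ] E) with hA
  have hAz : ∀ z : E, A z = (Φ' x).symm z := fun z => rfl
  set CB : ℝ := ‖A‖ * (L : ℝ) with hCB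
  have hCB0 : 0 ≤ CB := by positivity
  have gb : ∀ z : E, ⟪v, (Φ' x).symm z⟫ ≤ ‖A‖ * ‖z‖ := by
    intro z
    have h1 : ⟪v, (Φ' x).symm z⟫ ≤ ‖v‖ * ‖(Φ' x).symm z‖ := real_inner_le_norm _ _
    have h3 : ‖A z‖ ≤ ‖A‖ * ‖z‖ := A.le_opNorm z
    rw [hv1, one_mul] at h1
    exact le_trans h1 h3
  have lip2 : ∀ a ∈ Metric.closedBall x ρ, ∀ b ∈ Metric.closedBall x ρ, ∀ ζ : E,
      ‖Φ' a ζ - Φ' b ζ‖ ≤ (L : ℝ) * ‖a - b‖ * ‖ζ‖ := by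
    intro a ha b hb ζ
    have h1 : dist ((Φ' a : E →L[ℝ] E)) ((Φ' b : E →L[ℝ] E)) ≤ (L:ℝ) * dist a b :=
      hL.dist_le_mul a (hρW ha) b (hρW hb)
    have h2 : Φ' a ζ - Φ' b ζ = ((Φ' a : E →L[ℝ] E) - (Φ' b : E →L[ℝ] E)) ζ := by
      simp [ContinuousLinearMap.sub_apply]
    rw [h2]
    calc ‖((Φ' a : E →L[ℝ] E) - (Φ' b : E →L[ℝ] E)) ζ‖
        ≤ ‖(Φ' a : E →L[ℝ] E) - (Φ' b : E →L[ℝ] E)‖ * ‖ζ‖ :=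
          ContinuousLinearMap.le_opNorm _ _
      _ ≤ (L:ℝ) * ‖a - b‖ * ‖ζ‖ := by
          rw [dist_eq_norm, dist_eq_norm] at h1
          exact mul_le_mul_of_nonneg_right h1 (norm_nonneg ζ)
  have h1cr : 0 < 1 - c*r := by
    have h2 : c * r < (1/r) * r := by
      exact mul_lt_mul_of_pos_right hcr hr
    rw [one_div, inv_mul_cancel₀ hr.ne'] at h2
    linarith
  set δ : ℝ := min t₀ ((1 - c*r)/(2*(CB+1))) with hδdef
  have hδ0 : 0 < δ := lt_min ht₀0 (by positivity)
  refine ⟨δ, hδ0, ?_⟩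
  intro y hy hnorm hne
  set h : E := y - x with hh
  have hh0 : h ≠ 0 := sub_ne_zero_of_ne hne
  have hhp : 0 < ‖h‖ := norm_pos_iff.2 hh0
  set s : ℝ := ⟪v, h⟫ with hs
  have hsupp2 : s ≤ -‖h‖ ^ 2 / (2*r) := hsupp y hy
  have hs0 : s < 0 := by
    have hq : 0 < ‖h‖ ^ 2 / (2*r) := by positivity
    have : -‖h‖ ^ 2 / (2*r) = -(‖h‖^2/(2*r)) := by ring
    rw [this] at hsupp2
    linarith
  have h2r : ‖h‖ ^ 2 ≤ 2*r*(-s) := by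
    have : -‖h‖ ^ 2 / (2*r) = -(‖h‖^2/(2*r)) := by ring
    rw [this, le_neg] at hsupp2
    rw [div_le_iff₀ (by positivity : (0:ℝ) < 2*r)] at hsupp2
    nlinarith
  set ξh : E := h - s • v with hξh
  have hperp : ⟪ξh, v⟫ = 0 := by
    rw [hξh, inner_sub_left, real_inner_smul_left, real_inner_self_eq_norm_sq, hv1,
      one_pow, mul_one, real_inner_comm, ← hs, sub_self]
  have hξh2 : ‖ξh‖ ^ 2 = ‖h‖ ^ 2 - s ^ 2 := by
    rw [hξh, @norm_sub_sq_real, real_inner_smul_right, real_inner_comm, ← hs,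
      norm_smul, Real.norm_eq_abs]
    have : (|s| * ‖v‖) ^ 2 = s ^ 2 := by rw [hv1, mul_one, sq_abs]
    rw [this]; ring
  have hξnorm : ‖ξh‖ ≤ ‖h‖ := by
    have h4 : ‖ξh‖ ^ 2 ≤ ‖h‖ ^ 2 := by rw [hξh2]; nlinarith [sq_nonneg s]
    nlinarith [norm_nonneg ξh, norm_nonneg h]
  have hmemh : ∀ t : ℝ, t ∈ Set.Icc (0:ℝ) 1 → x + t • h ∈ Metric.closedBall x ρ := by
    intro t ht
    rw [Metric.mem_closedBall, dist_eq_norm, add_sub_cancel_left, norm_smul, Real.norm_eq_abs,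
      abs_of_nonneg ht.1]
    have : t * ‖h‖ ≤ ‖h‖ := by nlinarith [ht.2, hhp.le]
    have hδρ : δ ≤ ρ := le_trans (min_le_left _ _) ht₀ρ
    linarith
  have hmemξ : ∀ t : ℝ, t ∈ Set.Icc (0:ℝ) 1 → x + t • ξh ∈ Metric.closedBall x ρ := by
    intro t ht
    rw [Metric.mem_closedBall, dist_eq_norm, add_sub_cancel_left, norm_smul, Real.norm_eq_abs,
      abs_of_nonneg ht.1]
    have : t * ‖ξh‖ ≤ ‖h‖ := by nlinarith [ht.2, norm_nonneg ξh, hξnorm]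
    have hδρ : δ ≤ ρ := le_trans (min_le_left _ _) ht₀ρ
    linarith
  set κ : ℝ := c*‖ξh‖^2 + 2*CB*(-s)*‖h‖ with hκ
  have hnξh : ‖h - ξh‖ = -s := by
    rw [hξh]
    simp only [sub_sub_cancel]
    rw [norm_smul, Real.norm_eq_abs, hv1, mul_one, abs_of_nonpos hs0.le]
  -- derivative bound
  have DB : ∀ t ∈ Set.Ioo (0:ℝ) 1,
      ⟪v, (Φ' x).symm ((Φ' (x + t • h)) h)⟫ - s ≤ κ * t := by
    intro t ht
    obtain ⟨ht0, ht1⟩ := ht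
    have htIcc : t ∈ Set.Icc (0:ℝ) 1 := ⟨ht0.le, ht1.le⟩
    have T1 : ⟪v, (Φ' x).symm (Φ' (x + t • ξh) ξh - Φ' x ξh)⟫ ≤ c*t*‖ξh‖^2 := by
      by_cases hξ0 : ξh = 0
      · simp [hξ0]
      · set nξ : ℝ := ‖ξh‖ with hnξ
        have hnξ0 : 0 < nξ := norm_pos_iff.2 hξ0
        set ξu : E := nξ⁻¹ • ξh with hξu
        have hξu1 : ‖ξu‖ = 1 := by
          rw [hξu, norm_smul, Real.norm_eq_abs, abs_of_pos (by positivity), ← hnξ,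
            inv_mul_cancel₀ hnξ0.ne']
        have hξuperp : ⟪ξu, v⟫ = 0 := by
          rw [hξu, real_inner_smul_left, hperp, mul_zero]
        set τ : ℝ := t * nξ with hτ
        have hτ0 : 0 < τ := by positivity
        have hτt₀ : τ < t₀ := by
          have h5 : τ < nξ := by
            rw [hτ]
            nlinarith
          have h6 : nξ < δ := lt_of_le_of_lt hξnorm hnorm
          have h7 : δ ≤ t₀ := min_le_left _ _
          linarith
        have hu := hunif ξu hξu1 hξuperp τ ⟨hτ0, hτt₀⟩
        have hpt : x + τ • ξu = x + t • ξh := by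
          rw [hτ, hξu, smul_smul, mul_assoc, mul_inv_cancel₀ hnξ0.ne', mul_one]
        rw [hpt] at hu
        have hrew : Φ' (x + t • ξh) ξu - Φ' x ξu = nξ⁻¹ • (Φ' (x + t • ξh) ξh - Φ' x ξh) := by
          rw [hξu, map_smul, map_smul]
          exact (smul_sub _ _ _).symm
        rw [hrew, map_smul, real_inner_smul_right] at hu
        have h8 : ⟪v, (Φ' x).symm (Φ' (x + t • ξh) ξh - Φ' x ξh)⟫
            = nξ * (nξ⁻¹ * ⟪v, (Φ' x).symm (Φ' (x + t • ξh) ξh - Φ' x ξh)⟫) := by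
          rw [← mul_assoc, mul_inv_cancel₀ hnξ0.ne', one_mul]
        rw [h8]
        calc nξ * (nξ⁻¹ * ⟪v, (Φ' x).symm (Φ' (x + t • ξh) ξh - Φ' x ξh)⟫)
            ≤ nξ * (c * τ) := mul_le_mul_of_nonneg_left hu hnξ0.le
          _ = c*t*‖ξh‖^2 := by rw [hτ, hnξ]; ring
    have hdec : (Φ' (x + t • h)) h - (Φ' x) h
        = (Φ' (x + t • ξh) ξh - Φ' x ξh)
          + ((Φ' (x + t • h)) h - (Φ' (x + t • ξh)) h)
          + ((Φ' (x + t • ξh)) (h - ξh) - (Φ' x) (h - ξh)) := by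
      have e1 : (Φ' (x + t • ξh)) (h - ξh) = (Φ' (x + t • ξh)) h - (Φ' (x + t • ξh)) ξh :=
        map_sub _ _ _
      have e2 : (Φ' x) (h - ξh) = (Φ' x) h - (Φ' x) ξh := map_sub _ _ _
      rw [e1, e2]; abel
    have hb2 : ‖(Φ' (x + t • h)) h - (Φ' (x + t • ξh)) h‖ ≤ (L:ℝ) * (t * (-s)) * ‖h‖ := by
      have h4 := lip2 _ (hmemh t htIcc) _ (hmemξ t htIcc) h
      have e3 : (x + t • h) - (x + t • ξh) = t • (h - ξh) := by module
      rw [e3, norm_smul, Real.norm_eq_abs, abs_of_pos ht0, hnξh] at h4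
      exact h4
    have hb3 : ‖(Φ' (x + t • ξh)) (h - ξh) - (Φ' x) (h - ξh)‖ ≤ (L:ℝ) * (t * (-s)) * ‖h‖ := by
      have h4 := lip2 _ (hmemξ t htIcc) _ (Metric.mem_closedBall_self hρ0.le) (h - ξh)
      rw [add_sub_cancel_left, norm_smul, Real.norm_eq_abs, abs_of_pos ht0, hnξh] at h4
      have ha0 : 0 ≤ (L:ℝ) * t * (-s) :=
        mul_nonneg (mul_nonneg L.2 ht0.le) (neg_nonneg.2 hs0.le)
      calc ‖(Φ' (x + t • ξh)) (h - ξh) - (Φ' x) (h - ξh)‖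
          ≤ (L:ℝ) * (t * ‖ξh‖) * (-s) := h4
        _ = ((L:ℝ) * t * (-s)) * ‖ξh‖ := by ring
        _ ≤ ((L:ℝ) * t * (-s)) * ‖h‖ := mul_le_mul_of_nonneg_left hξnorm ha0
        _ = (L:ℝ) * (t * (-s)) * ‖h‖ := by ring
    have hsym : ⟪v, (Φ' x).symm ((Φ' (x + t • h)) h)⟫ - s
        = ⟪v, (Φ' x).symm ((Φ' (x + t • h)) h - (Φ' x) h)⟫ := by
      rw [map_sub ((Φ' x).symm : E ≃L[ℝ] E), inner_sub_right]
      have e4 : (Φ' x).symm ((Φ' x) h) = h := ContinuousLinearEquiv.symm_apply_apply _ _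
      rw [e4, ← hs]
    rw [hsym, hdec, map_add ((Φ' x).symm : E ≃L[ℝ] E), map_add ((Φ' x).symm : E ≃L[ℝ] E),
      inner_add_right, inner_add_right]
    have g2 := le_trans (gb ((Φ' (x + t • h)) h - (Φ' (x + t • ξh)) h))
      (mul_le_mul_of_nonneg_left hb2 (norm_nonneg A))
    have g3 := le_trans (gb ((Φ' (x + t • ξh)) (h - ξh) - (Φ' x) (h - ξh)))
      (mul_le_mul_of_nonneg_left hb3 (norm_nonneg A))
    have : κ * t = c*t*‖ξh‖^2 + (‖A‖ * ((L:ℝ) * (t * (-s)) * ‖h‖)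
        + ‖A‖ * ((L:ℝ) * (t * (-s)) * ‖h‖)) := by
      rw [hκ, hCB]; ring
    rw [this]
    linarith
  
  -- the comparison function
  set χ : ℝ → ℝ := fun u => ⟪v, (Φ' x).symm (Φ (x + u • h) - Φ x)⟫ - u * s - κ/2 * u^2 with hχ
  have hder : ∀ t ∈ Set.Icc (0:ℝ) 1,
      HasDerivAt χ (⟪v, (Φ' x).symm ((Φ' (x + t • h)) h)⟫ - s - κ * t) t := by
    intro t ht
    have hline : HasDerivAt (fun u : ℝ => x + u • h) h t := by
      simpa using (((hasDerivAt_id t).smul_const h).const_add x)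
    have hmemU : x + t • h ∈ U := hρU (hmemh t ht)
    have hΦd : HasDerivAt (fun u : ℝ => Φ (x + u • h)) ((Φ' (x + t • h) : E →L[ℝ] E) h) t :=
      (hd _ hmemU).comp_hasDerivAt t hline
    have hsub : HasDerivAt (fun u : ℝ => Φ (x + u • h) - Φ x)
        ((Φ' (x + t • h) : E →L[ℝ] E) h) t := hΦd.sub_const (Φ x)
    have hA2 : HasDerivAt (fun u : ℝ => A (Φ (x + u • h) - Φ x))
        (A ((Φ' (x + t • h)) h)) t := (A.hasFDerivAt).comp_hasDerivAt t hsub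
    have hinner : HasDerivAt (fun u : ℝ => ⟪v, (Φ' x).symm (Φ (x + u • h) - Φ x)⟫)
        (⟪v, (Φ' x).symm ((Φ' (x + t • h)) h)⟫) t :=
      ((innerSL ℝ v).hasFDerivAt).comp_hasDerivAt t hA2
    have hts : HasDerivAt (fun u : ℝ => u * s) s t := hasDerivAt_mul_const s
    have hqd : HasDerivAt (fun u : ℝ => κ/2 * u^2) (κ/2 * (2*t^1)) t :=
      (hasDerivAt_pow 2 t).const_mul (κ/2)
    have := (hinner.sub hts).sub hqd
    exact this.congr_deriv (by ring)
  have hderiv_nonpos : ∀ t ∈ interior (Set.Icc (0:ℝ) 1), deriv χ t ≤ 0 := by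
    intro t ht
    rw [interior_Icc] at ht
    rw [(hder t ⟨ht.1.le, ht.2.le⟩).deriv]
    have := DB t ht
    linarith
  have hcont : ContinuousOn χ (Set.Icc (0:ℝ) 1) :=
    fun t ht => (hder t ht).continuousAt.continuousWithinAt
  have hdiff : DifferentiableOn ℝ χ (interior (Set.Icc (0:ℝ) 1)) := by
    intro t ht
    rw [interior_Icc] at ht
    exact ((hder t ⟨ht.1.le, ht.2.le⟩).differentiableAt).differentiableWithinAt
  have hanti := antitoneOn_of_deriv_nonpos (convex_Icc (0:ℝ) 1) hcont hdiff hderiv_nonpos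
  have hχ10 : χ 1 ≤ χ 0 :=
    hanti (Set.left_mem_Icc.2 zero_le_one) (Set.right_mem_Icc.2 zero_le_one) zero_le_one
  have hχ0 : χ 0 = 0 := by
    rw [hχ]
    simp
  have hχ1 : χ 1 = ⟪v, (Φ' x).symm (Φ y - Φ x)⟫ - s - κ/2 := by
    have hy1 : x + (1:ℝ) • h = y := by rw [one_smul, hh]; abel
    simp only [hχ, hy1, one_pow, mul_one, one_mul]

  have hfin : ⟪v, (Φ' x).symm (Φ y - Φ x)⟫ ≤ s + κ/2 := by
    rw [hχ0, hχ1] at hχ10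
    linarith
  -- final numeric estimate
  have hCBh : CB * ‖h‖ ≤ (1 - c*r)/2 := by
    have h5 : ‖h‖ ≤ (1 - c*r)/(2*(CB+1)) := le_of_lt (lt_of_lt_of_le hnorm (min_le_right _ _))
    have h6 : CB * ‖h‖ ≤ CB * ((1 - c*r)/(2*(CB+1))) :=
      mul_le_mul_of_nonneg_left h5 hCB0
    have h7 : CB * ((1 - c*r)/(2*(CB+1))) ≤ (1 - c*r)/2 := by
      have h8 : (2*(CB+1)) * ((1 - c*r)/(2*(CB+1))) = 1 - c*r := by field_simp
      have hX0 : 0 ≤ (1 - c*r)/(2*(CB+1)) := by positivity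
      nlinarith [h8, hX0]
    linarith
  have e1 : c*‖ξh‖^2/2 ≤ c*r*(-s) := by
    rw [hξh2]
    nlinarith [sq_nonneg s]
  have hlast : s + κ/2 < 0 := by
    have e2 : s + κ/2 = s + c*‖ξh‖^2/2 + CB*(-s)*‖h‖ := by rw [hκ]; ring
    have e3 : s + κ/2 ≤ (-s) * (c*r - 1 + CB*‖h‖) := by
      rw [e2]
      nlinarith
    have e4 : c*r - 1 + CB*‖h‖ < 0 := by linarith
    have e5 : (-s) * (c*r - 1 + CB*‖h‖) < 0 :=
      mul_neg_of_pos_of_neg (by linarith) e4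
    linarith
  linarith

end aux

set_option maxHeartbeats 1000000 in
theorem stmt_13 (n : ℕ) (hn : 2 ≤ n)
    (U V : Set (EuclideanSpace ℝ (Fin n))) (hU : IsOpen U) (hV : IsOpen V)
    (Φ : EuclideanSpace ℝ (Fin n) → EuclideanSpace ℝ (Fin n))
    (Φ' : EuclideanSpace ℝ (Fin n) →
      (EuclideanSpace ℝ (Fin n) ≃L[ℝ] EuclideanSpace ℝ (Fin n)))
    -- Φ is a C¹,¹-diffeomorphism of U onto V with derivative Φ'
    (hbij : Set.BijOn Φ U V)
    (hd : ∀ x ∈ U, HasFDerivAt Φ (Φ' x : EuclideanSpace ℝ (Fin n) →L[ℝ]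
      EuclideanSpace ℝ (Fin n)) x)
    (hlip : ∀ x ∈ U, ∃ (L : NNReal) (W : Set (EuclideanSpace ℝ (Fin n))),
      W ∈ nhds x ∧ LipschitzOnWith L (fun y =>
        (Φ' y : EuclideanSpace ℝ (Fin n) →L[ℝ] EuclideanSpace ℝ (Fin n))) W)
    -- Ω is r-convex, Ω ⊆ U, Ω ≠ ℝⁿ
    (r : ℝ) (hr : 0 < r) (M Ω : Set (EuclideanSpace ℝ (Fin n)))
    (hΩ : Ω = ⋂ z ∈ M, Metric.closedBall z r)
    (hΩU : Ω ⊆ U) (hΩne : Ω ≠ Set.univ)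
    -- the curvature condition at every boundary point
    (hcond : ∀ x ∈ frontier Ω, ∃ v : EuclideanSpace ℝ (Fin n), ‖v‖ = 1 ∧
      (∀ y ∈ Ω, ⟪v, y - x⟫ ≤ 0) ∧
      ∀ ξ : EuclideanSpace ℝ (Fin n), ⟪ξ, v⟫ = 0 → ξ ≠ 0 →
        Filter.limsup (fun t : ℝ =>
            ⟪v, (Φ' x).symm (Φ' (x + t • ξ) ξ - Φ' x ξ)⟫ / t)
          (nhdsWithin 0 (Set.Ioi 0)) < ‖ξ‖ ^ 2 / r) :
    Convex ℝ (Φ '' Ω) := by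
  classical
  have hΩconv : Convex ℝ Ω := by
    rw [hΩ]; exact convex_iInter fun z => convex_iInter fun _ => convex_closedBall _ _
  have hΩclosed : IsClosed Ω := by
    rw [hΩ]; exact isClosed_biInter fun z _ => Metric.isClosed_closedBall
  have hM : M.Nonempty := by
    rcases Set.eq_empty_or_nonempty M with h | h
    · exfalso; apply hΩne; rw [hΩ, h]; simp
    · exact h
  obtain ⟨z₀, hz₀⟩ := hM
  have hΩcomp : IsCompact Ω := by
    have hsub : Ω ⊆ Metric.closedBall z₀ r := by
      rw [hΩ]; exact Set.biInter_subset_of_mem hz₀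
    exact (isCompact_closedBall z₀ r).of_isClosed_subset hΩclosed hsub
  rcases Set.subsingleton_or_nontrivial Ω with hss | hnt
  · exact (hss.image Φ).convex
  obtain ⟨a, ha, b, hb, hab⟩ := hnt
  have hint : (interior Ω).Nonempty := aux_interior hr hΩ ha hb hab
  have hΦcont : ContinuousOn Φ U :=
    fun z hz => ((hd z hz).differentiableAt).continuousAt.continuousWithinAt
  have hKcomp : IsCompact (Φ '' Ω) := hΩcomp.image_of_continuousOn (hΦcont.mono hΩU)
  have hKclosed : IsClosed (Φ '' Ω) := hKcomp.isClosed
  have hinj : Set.InjOn Φ U := hbij.injOn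
  have hintU : interior Ω ⊆ U := le_trans interior_subset hΩU
  have hOopen : IsOpen (Φ '' interior Ω) := aux_open hU hd hlip isOpen_interior hintU
  have key : ∀ x' ∈ Ω, x' ∉ interior Ω → ∃ (v : EuclideanSpace ℝ (Fin n)) (δ : ℝ), 0 < δ ∧
      ∀ y ∈ Ω, ‖y - x'‖ < δ → y ≠ x' → ⟪v, (Φ' x').symm (Φ y - Φ x')⟫ < 0 := by
    intro x' hx' hx'int
    have hxfr : x' ∈ frontier Ω := by
      rw [frontier, hΩclosed.closure_eq]; exact ⟨hx', hx'int⟩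
    obtain ⟨v, hv1, hvn, hvc⟩ := hcond x' hxfr
    have hxU' : x' ∈ U := hΩU hx'
    obtain ⟨L, W, hW, hL⟩ := hlip x' hxU'
    have hsupp := aux_support hr hΩ ⟨z₀, hz₀⟩ hx' hv1 hvn
    obtain ⟨δ, hδ0, hδ⟩ := aux_key hU hd hxU' hW hL hr hv1 hvc hsupp
    exact ⟨v, δ, hδ0, hδ⟩
  have hinv : ∀ x' ∈ Ω, ∀ δ : ℝ, 0 < δ →
      ∃ δ' > 0, ∀ y ∈ Ω, ‖Φ y - Φ x'‖ < δ' → ‖y - x'‖ < δ :=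
    fun x' hx' δ hδ => aux_invcont hΩcomp (hΦcont.mono hΩU) (hinj.mono hΩU) hx' hδ
  
  -- segment lemma for interior points
  have hseg : ∀ p ∈ interior Ω, ∀ q ∈ interior Ω, ∀ t ∈ Set.Icc (0:ℝ) 1,
      (1 - t) • Φ p + t • Φ q ∈ Φ '' Ω := by
    intro p hp q hq
    set g : ℝ → EuclideanSpace ℝ (Fin n) := fun u => p + u • (q - p) with hg
    have hgmem : ∀ u ∈ Set.Icc (0:ℝ) 1, g u ∈ interior Ω := by
      intro u hu
      exact (hΩconv.interior).add_smul_sub_mem hp hq hu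
    have hgc : Continuous g := by
      rw [hg]; exact continuous_const.add (continuous_id.smul continuous_const)
    have hΦg : ContinuousOn (fun u => Φ (g u)) (Set.Icc (0:ℝ) 1) := by
      apply (hΦcont.mono hintU).comp hgc.continuousOn
      intro u hu
      exact hgmem u hu
    set S : Set ℝ := {u | u ∈ Set.Icc (0:ℝ) 1 ∧
      ∀ t ∈ Set.Icc (0:ℝ) 1, (1-t) • Φ p + t • Φ (g u) ∈ Φ '' Ω} with hSdef
    have hSeq : S = ⋂ t ∈ Set.Icc (0:ℝ) 1,
        {u | u ∈ Set.Icc (0:ℝ) 1 ∧ (1-t) • Φ p + t • Φ (g u) ∈ Φ '' Ω} := by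
      ext u
      simp only [hSdef, Set.mem_setOf_eq, Set.mem_iInter]
      constructor
      · intro ⟨h1, h2⟩ t ht
        exact ⟨h1, h2 t ht⟩
      · intro h1
        refine ⟨(h1 0 (Set.left_mem_Icc.2 zero_le_one)).1, ?_⟩
        intro t ht
        exact (h1 t ht).2
    have hSclosed : IsClosed S := by
      rw [hSeq]
      apply isClosed_biInter
      intro t ht
      have hce : ContinuousOn (fun u => (1-t) • Φ p + t • Φ (g u)) (Set.Icc (0:ℝ) 1) :=
        continuousOn_const.add (hΦg.const_smul t)
      have : {u | u ∈ Set.Icc (0:ℝ) 1 ∧ (1-t) • Φ p + t • Φ (g u) ∈ Φ '' Ω}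
          = Set.Icc (0:ℝ) 1 ∩ (fun u => (1-t) • Φ p + t • Φ (g u)) ⁻¹' (Φ '' Ω) := rfl
      rw [this]
      exact hce.preimage_isClosed_of_isClosed isClosed_Icc hKclosed
    have hS0 : (0:ℝ) ∈ S := by
      refine ⟨Set.left_mem_Icc.2 zero_le_one, ?_⟩
      intro t ht
      have hg0 : g 0 = p := by rw [hg]; simp
      rw [hg0]
      have : (1-t) • Φ p + t • Φ p = Φ p := by
        rw [← add_smul]; norm_num
      rw [this]
      exact ⟨p, interior_subset hp, rfl⟩
    have hSopen : ∀ s₀ ∈ S, ∃ ε > 0, ∀ s' ∈ Set.Icc (0:ℝ) 1, |s' - s₀| < ε → s' ∈ S := by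
      intro s₀ hs₀
      obtain ⟨hs₀Icc, hs₀seg⟩ := hs₀
      have hsegO : ∀ t ∈ Set.Icc (0:ℝ) 1,
          (1-t) • Φ p + t • Φ (g s₀) ∈ Φ '' interior Ω := by
        intro t ht
        obtain ⟨xt, hxtΩ, hxteq⟩ := hs₀seg t ht
        by_cases hxtint : xt ∈ interior Ω
        · exact ⟨xt, hxtint, hxteq⟩
        exfalso
        obtain ⟨v, δ, hδ0, hsupp'⟩ := key xt hxtΩ hxtint
        set e : EuclideanSpace ℝ (Fin n) := Φ (g s₀) - Φ p with he
        by_cases he0 : e = 0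
        · have h1 : Φ (g s₀) = Φ p := by
            have := he0; rw [he, sub_eq_zero] at this; exact this
          have h2 : Φ xt = Φ p := by
            rw [hxteq, h1, ← add_smul]; norm_num
          have h4 : xt = p := hinj (hΩU hxtΩ) (hintU hp) h2
          rw [h4] at hxtint; exact hxtint hp
        have hgsint : g s₀ ∈ interior Ω := hgmem s₀ hs₀Icc
        have ht0 : 0 < t := by
          rcases lt_or_eq_of_le ht.1 with h | h
          · exact h
          exfalso
          have h2 : Φ xt = Φ p := by rw [hxteq, ← h]; simp
          have h4 : xt = p := hinj (hΩU hxtΩ) (hintU hp) h2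
          rw [h4] at hxtint; exact hxtint hp
        have ht1 : t < 1 := by
          rcases lt_or_eq_of_le ht.2 with h | h
          · exact h
          exfalso
          have h2 : Φ xt = Φ (g s₀) := by rw [hxteq, h]; simp
          have h4 : xt = g s₀ := hinj (hΩU hxtΩ) (hintU hgsint) h2
          rw [h4] at hxtint; exact hxtint hgsint
        obtain ⟨δ', hδ'0, hδ'⟩ := hinv xt hxtΩ δ hδ0
        have hepos : 0 < ‖e‖ := norm_pos_iff.2 he0
        set τ : ℝ := min (min (t/2) ((1-t)/2)) (δ' / (2*‖e‖)) with hτdef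
        have hτ0 : 0 < τ := by
          apply lt_min (lt_min (by linarith) (by linarith))
          positivity
        have hτt : t + τ ≤ 1 := by
          have h5 : τ ≤ (1-t)/2 := le_trans (min_le_left _ _) (min_le_right _ _)
          linarith
        have hτt' : 0 ≤ t - τ := by
          have h5 : τ ≤ t/2 := le_trans (min_le_left _ _) (min_le_left _ _)
          linarith
        have hτe : τ * ‖e‖ < δ' := by
          have h5 : τ ≤ δ' / (2*‖e‖) := min_le_right _ _
          have h6 : τ * ‖e‖ ≤ (δ' / (2*‖e‖)) * ‖e‖ :=
            mul_le_mul_of_nonneg_right h5 (norm_nonneg e)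
          have h7 : (δ' / (2*‖e‖)) * ‖e‖ = δ' / 2 := by field_simp
          rw [h7] at h6
          linarith
        -- the two neighbours
        have hz1 := hs₀seg (t+τ) ⟨by linarith, hτt⟩
        have hz2 := hs₀seg (t-τ) ⟨hτt', by linarith⟩
        obtain ⟨y1, hy1Ω, hy1eq⟩ := hz1
        obtain ⟨y2, hy2Ω, hy2eq⟩ := hz2
        have hd1 : Φ y1 - Φ xt = τ • e := by
          rw [hy1eq, hxteq, he]; module
        have hd2 : Φ y2 - Φ xt = -(τ • e) := by
          rw [hy2eq, hxteq, he]; module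
        have hn1 : ‖Φ y1 - Φ xt‖ < δ' := by
          rw [hd1, norm_smul, Real.norm_eq_abs, abs_of_pos hτ0]; exact hτe
        have hn2 : ‖Φ y2 - Φ xt‖ < δ' := by
          rw [hd2, norm_neg, norm_smul, Real.norm_eq_abs, abs_of_pos hτ0]; exact hτe
        have hy1x : ‖y1 - xt‖ < δ := hδ' y1 hy1Ω hn1
        have hy2x : ‖y2 - xt‖ < δ := hδ' y2 hy2Ω hn2
        have hy1ne : y1 ≠ xt := by
          intro hcontra
          rw [hcontra, sub_self] at hd1
          exact (smul_ne_zero hτ0.ne' he0) hd1.symm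
        have hy2ne : y2 ≠ xt := by
          intro hcontra
          rw [hcontra, sub_self] at hd2
          apply (smul_ne_zero hτ0.ne' he0)
          have := hd2.symm
          rwa [neg_eq_zero] at this
        have hq1 := hsupp' y1 hy1Ω hy1x hy1ne
        have hq2 := hsupp' y2 hy2Ω hy2x hy2ne
        rw [hd1, map_smul, real_inner_smul_right] at hq1
        rw [hd2, map_neg, map_smul, inner_neg_right, real_inner_smul_right] at hq2
        nlinarith
      -- thickening / tube argument
      have hc2 : Continuous (fun t : ℝ => (1-t) • Φ p + t • Φ (g s₀)) := by
        apply Continuous.add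
        · exact (continuous_const.sub continuous_id).smul continuous_const
        · exact continuous_id.smul continuous_const
      have hsegcomp : IsCompact ((fun t : ℝ => (1-t) • Φ p + t • Φ (g s₀)) '' Set.Icc 0 1) :=
        isCompact_Icc.image hc2
      have hsub2 : ((fun t : ℝ => (1-t) • Φ p + t • Φ (g s₀)) '' Set.Icc 0 1)
          ⊆ Φ '' interior Ω := by
        rintro _ ⟨t, ht, rfl⟩
        exact hsegO t ht
      obtain ⟨η, hη0, hηsub⟩ := hsegcomp.exists_thickening_subset_open hOopen hsub2
      have hgcat : ContinuousAt (fun u => Φ (g u)) s₀ := by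
        have h1 : ContinuousAt Φ (g s₀) :=
          ((hd _ (hintU (hgmem s₀ hs₀Icc))).differentiableAt).continuousAt
        exact h1.comp hgc.continuousAt
      rw [Metric.continuousAt_iff] at hgcat
      obtain ⟨ε, hε0, hεimp⟩ := hgcat η hη0
      refine ⟨ε, hε0, ?_⟩
      intro s' hs'Icc hs'close
      refine ⟨hs'Icc, ?_⟩
      intro t ht
      have hdist : dist (Φ (g s')) (Φ (g s₀)) < η := hεimp (by
        rw [Real.dist_eq]; exact hs'close)
      have hz : (1-t) • Φ p + t • Φ (g s') ∈
          Metric.thickening η ((fun t : ℝ => (1-t) • Φ p + t • Φ (g s₀)) '' Set.Icc 0 1) := by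
        rw [Metric.mem_thickening_iff]
        refine ⟨(1-t) • Φ p + t • Φ (g s₀), ⟨t, ht, rfl⟩, ?_⟩
        have h8 : dist ((1-t) • Φ p + t • Φ (g s')) ((1-t) • Φ p + t • Φ (g s₀))
            = t * dist (Φ (g s')) (Φ (g s₀)) := by
          rw [dist_eq_norm, dist_eq_norm]
          have h9 : (1-t) • Φ p + t • Φ (g s') - ((1-t) • Φ p + t • Φ (g s₀))
              = t • (Φ (g s') - Φ (g s₀)) := by module
          rw [h9, norm_smul, Real.norm_eq_abs, abs_of_nonneg ht.1]
        rw [h8]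
        calc t * dist (Φ (g s')) (Φ (g s₀)) ≤ 1 * dist (Φ (g s')) (Φ (g s₀)) := by
              apply mul_le_mul_of_nonneg_right ht.2 dist_nonneg
          _ = dist (Φ (g s')) (Φ (g s₀)) := one_mul _
          _ < η := hdist
      have h10 := hηsub hz
      exact Set.image_mono interior_subset h10
    -- conclude 1 ∈ S by a sup argument
    have h1S : (1:ℝ) ∈ S := by
      have hSne : S.Nonempty := ⟨0, hS0⟩
      have hSbdd : BddAbove S := ⟨1, fun u hu => hu.1.2⟩
      set σ := sSup S with hσdef
      have hσS : σ ∈ S := hSclosed.csSup_mem hSne hSbdd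
      by_contra h1
      have hσle : σ ≤ 1 := hσS.1.2
      have hσ1 : σ < 1 := lt_of_le_of_ne hσle (by
        intro hcontra; rw [hcontra] at hσS; exact h1 hσS)
      obtain ⟨ε, hε0, hεS⟩ := hSopen σ hσS
      set s' : ℝ := min 1 (σ + ε/2) with hs'def
      have hσ0 : 0 ≤ σ := hσS.1.1
      have hs'Icc : s' ∈ Set.Icc (0:ℝ) 1 := by
        constructor
        · apply le_min (by norm_num) (by linarith)
        · exact min_le_left _ _
      have hs'ges : σ ≤ s' := le_min hσle (by linarith)
      have hs'close : |s' - σ| < ε := by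
        rw [abs_of_nonneg (by linarith)]
        have : s' ≤ σ + ε/2 := min_le_right _ _
        linarith
      have hs'S : s' ∈ S := hεS s' hs'Icc hs'close
      have hs'le : s' ≤ σ := le_csSup hSbdd hs'S
      have hs'gt : σ < s' := lt_min (by linarith) (by linarith)
      linarith
    intro t ht
    have h2 := h1S.2 t ht
    have hg1 : g 1 = q := by rw [hg]; simp
    rwa [hg1] at h2
  -- density of interior points and conclusion
  have hclos : Ω ⊆ closure (interior Ω) := by
    obtain ⟨m, hm⟩ := hint
    intro w hw
    rw [mem_closure_iff_seq_limit]
    refine ⟨fun k => (1 - (1/(k+1) : ℝ)) • w + (1/(k+1) : ℝ) • m, ?_, ?_⟩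
    · intro k
      apply hΩconv.combo_closure_interior_mem_interior (subset_closure hw) hm
      · have h1 : (0:ℝ) < 1/((k:ℝ)+1) := by positivity
        have h2 : (1:ℝ)/((k:ℝ)+1) ≤ 1 := by
          rw [div_le_one (by positivity)]
          have : (0:ℝ) ≤ (k:ℝ) := Nat.cast_nonneg k
          linarith
        linarith
      · positivity
      · ring
    · have hl : Tendsto (fun k : ℕ => (1/((k:ℝ)+1))) atTop (𝓝 0) :=
        tendsto_one_div_add_atTop_nhds_zero_nat
      have : Tendsto (fun k : ℕ => (1 - (1/((k:ℝ)+1))) • w + (1/((k:ℝ)+1)) • m) atTop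
          (𝓝 ((1 - (0:ℝ)) • w + (0:ℝ) • m)) := by
        apply Tendsto.add
        · exact (Tendsto.smul ((tendsto_const_nhds).sub hl) tendsto_const_nhds)
        · exact hl.smul_const m
      simpa using this
  -- finish: convexity
  intro za hza zb hzb ta tb hta htb htab
  obtain ⟨pa, hpa, rfl⟩ := hza
  obtain ⟨pb, hpb, rfl⟩ := hzb
  obtain ⟨ua, huaint, hualim⟩ := mem_closure_iff_seq_limit.1 (hclos hpa)
  obtain ⟨ub, hubint, hublim⟩ := mem_closure_iff_seq_limit.1 (hclos hpb)
  have hmemk : ∀ k, ta • Φ (ua k) + tb • Φ (ub k) ∈ Φ '' Ω := by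
    intro k
    have h1 : ta = 1 - tb := by linarith
    rw [h1]
    exact hseg (ua k) (huaint k) (ub k) (hubint k) tb ⟨htb, by linarith⟩
  have hΦua : Tendsto (fun k => Φ (ua k)) atTop (𝓝 (Φ pa)) := by
    have h1 : ContinuousAt Φ pa := ((hd _ (hΩU hpa)).differentiableAt).continuousAt
    exact h1.tendsto.comp hualim
  have hΦub : Tendsto (fun k => Φ (ub k)) atTop (𝓝 (Φ pb)) := by
    have h1 : ContinuousAt Φ pb := ((hd _ (hΩU hpb)).differentiableAt).continuousAt
    exact h1.tendsto.comp hublim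
  have hlim2 : Tendsto (fun k => ta • Φ (ua k) + tb • Φ (ub k)) atTop
      (𝓝 (ta • Φ pa + tb • Φ pb)) :=
    ((hΦua.const_smul ta).add (hΦub.const_smul tb))
  exact hKclosed.mem_of_tendsto hlim2 (Eventually.of_forall hmemk)
end

section
/- Define h(α) = cosh((9β² + (α + 4β)²)^{1/2}) / cosh(α + 4β) − e^β for α, β ≥ 0. Then h(α) ≤ 0 for all α ≥ 0 and all β ≥ 0. -/
theorem stmt_16 (α β : ℝ) (hα : 0 ≤ α) (hβ : 0 ≤ β) :
    Real.cosh (Real.sqrt (9 * β ^ 2 + (α + 4 * β) ^ 2)) / Real.cosh (α + 4 * β)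
      - Real.exp β ≤ 0 := by
  set μ := α + 4 * β with hμdef
  have hμ : 0 ≤ μ := by positivity
  have hs : Real.sqrt (9 * β ^ 2 + μ ^ 2) ≤ μ + β := by
    rw [show μ + β = Real.sqrt ((μ + β) ^ 2) from (Real.sqrt_sq (by positivity)).symm]
    apply Real.sqrt_le_sqrt
    nlinarith
  have h1 : Real.cosh (Real.sqrt (9 * β ^ 2 + μ ^ 2)) ≤ Real.cosh (μ + β) := by
    rw [Real.cosh_le_cosh, abs_of_nonneg (Real.sqrt_nonneg _), abs_of_nonneg (by positivity)]
    exact hs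
  have h2 : Real.cosh (μ + β) ≤ Real.cosh μ * Real.exp β := by
    rw [Real.cosh_add, ← Real.sinh_add_cosh β, mul_add]
    have e1 : Real.cosh μ - Real.sinh μ = Real.exp (-μ) := Real.cosh_sub_sinh μ
    have e2 : Real.sinh β + Real.cosh β = Real.exp β := Real.sinh_add_cosh β
    have e3 : 0 ≤ Real.sinh β := by simpa using Real.sinh_le_sinh.mpr hβ
    have e4 : 0 < Real.exp (-μ) := Real.exp_pos _
    nlinarith [mul_nonneg e3 (by linarith : (0:ℝ) ≤ Real.cosh μ - Real.sinh μ)]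
  have hc : 0 < Real.cosh μ := Real.cosh_pos μ
  rw [sub_nonpos, div_le_iff₀ hc]
  calc Real.cosh (Real.sqrt (9 * β ^ 2 + μ ^ 2)) ≤ Real.cosh μ * Real.exp β :=
        le_trans h1 h2
    _ = Real.exp β * Real.cosh μ := mul_comm _ _
end
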